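/- arXiv:1312.6340 — 6 statements merged into one kernel-verified Lean document; each statement's English description precedes it below -/
import Mathlib

section
/- Let P₁, …, P_m ⊂ ℝ^N be integral convex polytopes with d_i = dim P_i, and let n₁, …, n_m be integers with n_i ≥ d_i + 1 for all i. Then every lattice point of n₁P₁ + ⋯ + n_mP_m can be written as α' + ∑_i ∑_{j=1}^{n_i - d_i} β_j^{(i)} where α' is a lattice point of d₁P₁ + ⋯ + d_mP_m and each β_j^{(i)} ∈ P_i ∩ ℤ^N. -/
open Pointwise

/-- Membership in a finite Minkowski sum of sets gives a decomposition. -/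
lemma mem_finset_sum_sets' {ι E : Type*} [AddCommMonoid E] (t : Finset ι) (S : ι → Set E)
    (x : E) (hx : x ∈ ∑ i ∈ t, S i) :
    ∃ f : ι → E, (∀ i ∈ t, f i ∈ S i) ∧ x = ∑ i ∈ t, f i := by
  classical
  induction t using Finset.cons_induction generalizing x with
  | empty => exact ⟨fun _ => 0, by simp, by simpa using hx⟩
  | cons a t ha ih =>
    rw [Finset.sum_cons] at hx
    obtain ⟨u, hu, v, hv, rfl⟩ := Set.mem_add.mp hx
    obtain ⟨f, hf, rfl⟩ := ih v hv
    refine ⟨Function.update f a u, ?_, ?_⟩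
    · intro i hi
      rcases Finset.mem_cons.mp hi with rfl | hi'
      · simpa using hu
      · have hne : i ≠ a := by rintro rfl; exact ha hi'
        simpa [Function.update_of_ne hne] using hf i hi'
    · rw [Finset.sum_cons, Function.update_self]
      congr 1
      refine Finset.sum_congr rfl fun i hi => ?_
      have hne : i ≠ a := by rintro rfl; exact ha hi
      simp [Function.update_of_ne hne]

/-- Sums of members lie in the Minkowski sum. -/
lemma sum_mem_finset_sum_sets' {ι E : Type*} [AddCommMonoid E] (t : Finset ι) (S : ι → Set E)
    (f : ι → E) (hf : ∀ i ∈ t, f i ∈ S i) : ∑ i ∈ t, f i ∈ ∑ i ∈ t, S i := by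
  classical
  induction t using Finset.cons_induction with
  | empty => simp
  | cons a t ha ih =>
    rw [Finset.sum_cons, Finset.sum_cons]
    exact Set.add_mem_add (hf a (Finset.mem_cons_self a t))
      (ih fun i hi => hf i (Finset.mem_cons.2 (Or.inr hi)))

/-- The sum of a list of elements of a convex set `P` lies in `(length) • P`. -/
lemma list_sum_mem_smul' {E : Type*} [AddCommGroup E] [Module ℝ E] {P : Set E}
    (hc : Convex ℝ P) (hne : P.Nonempty) :
    ∀ l : List E, (∀ b ∈ l, b ∈ P) → l.sum ∈ (l.length : ℝ) • P := by
  intro l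
  induction l with
  | nil =>
    intro _
    rw [List.sum_nil, List.length_nil]
    rw [Nat.cast_zero, Set.zero_smul_set hne]
    exact Set.mem_singleton _
  | cons b l ih =>
    intro h
    have hb : b ∈ P := h b (List.mem_cons_self)
    have hl := ih fun x hx => h x (List.mem_cons_of_mem b hx)
    rw [List.sum_cons, List.length_cons]
    have key : ((l.length + 1 : ℕ) : ℝ) • P = (1 : ℝ) • P + (l.length : ℝ) • P := by
      push_cast
      rw [add_comm (l.length : ℝ) 1]
      exact hc.add_smul zero_le_one (by positivity)
    rw [key]
    exact Set.add_mem_add (Set.mem_smul_set.2 ⟨b, hb, one_smul _ _⟩) hl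

/-- A finite sum of reals each of which is an integer is an integer. -/
lemma exists_int_sum' {ι : Type*} (t : Finset ι) (f : ι → ℝ)
    (h : ∀ i ∈ t, ∃ z : ℤ, f i = (z : ℝ)) : ∃ z : ℤ, ∑ i ∈ t, f i = (z : ℝ) := by
  classical
  induction t using Finset.cons_induction with
  | empty => exact ⟨0, by simp⟩
  | cons a t ha ih =>
    obtain ⟨z, hz⟩ := h a (Finset.mem_cons_self a t)
    obtain ⟨w, hw⟩ := ih fun i hi => h i (Finset.mem_cons.2 (Or.inr hi))
    exact ⟨z + w, by rw [Finset.sum_cons, hz, hw]; push_cast; ring⟩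

/-- Key single-polytope decomposition: a point of `n • P` (where `P = conv(s)`,
`d = dim P`, `d + 1 ≤ n`) is a point of `d • P` plus a sum of `n - d` vertices. -/
lemma key_decomp' {N : ℕ} (s : Finset (Fin N → ℝ)) (hs : s.Nonempty) (d n : ℕ)
    (hdn : d + 1 ≤ n)
    (hdim : Module.finrank ℝ
      (affineSpan ℝ (convexHull ℝ (s : Set (Fin N → ℝ)))).direction = d)
    (α : Fin N → ℝ) (hα : α ∈ (n : ℝ) • convexHull ℝ (s : Set (Fin N → ℝ))) :
    ∃ (g : Fin N → ℝ) (l : List (Fin N → ℝ)),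
      g ∈ (d : ℝ) • convexHull ℝ (s : Set (Fin N → ℝ)) ∧ l.length = n - d ∧
      (∀ b ∈ l, b ∈ s) ∧ α = g + l.sum := by
  classical
  have hPne : (convexHull ℝ (s : Set (Fin N → ℝ))).Nonempty := by
    obtain ⟨x, hx⟩ := hs
    exact ⟨x, subset_convexHull ℝ _ hx⟩
  obtain ⟨y, hy, rfl⟩ := Set.mem_smul_set.mp hα
  rw [convexHull_eq_union] at hy
  simp only [Set.mem_iUnion] at hy
  obtain ⟨t, hts, hai, hyt⟩ := hy
  have htne : t.Nonempty := by
    rcases Finset.eq_empty_or_nonempty t with h | h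
    · rw [h] at hyt; simp at hyt
    · exact h
  have : Nonempty {x // x ∈ t} := htne.to_subtype
  -- cardinality bound from affine independence
  have hcard : t.card ≤ d + 1 := by
    have h1 : Module.finrank ℝ (vectorSpan ℝ (Set.range ((↑) : t → (Fin N → ℝ)))) + 1 =
        Fintype.card t := hai.finrank_vectorSpan_add_one
    have hrange : Set.range ((↑) : t → (Fin N → ℝ)) = (t : Set (Fin N → ℝ)) := by
      simp [Subtype.range_coe_subtype]
    rw [hrange] at h1
    have h2 : vectorSpan ℝ (t : Set (Fin N → ℝ)) ≤ (affineSpan ℝ (convexHull ℝ (s : Set (Fin N → ℝ)))).direction := by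
      rw [direction_affineSpan]
      exact vectorSpan_mono ℝ (hts.trans (subset_convexHull ℝ _))
    have h3 : Module.finrank ℝ (vectorSpan ℝ (t : Set (Fin N → ℝ))) ≤ d := by
      rw [← hdim]; exact Submodule.finrank_mono h2
    have h4 : Fintype.card t = t.card := Fintype.card_coe t
    omega
  -- convex combination weights
  rw [Finset.convexHull_eq] at hyt
  obtain ⟨w, hw0, hw1, hwy⟩ := hyt
  have hy_eq : y = ∑ x ∈ t, w x • x := by
    rw [← hwy, Finset.centerMass_eq_of_sum_1 _ _ hw1]; simp
  set lam : (Fin N → ℝ) → ℝ := fun x => (n : ℝ) * w x with hlam_def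
  have hlam0 : ∀ x ∈ t, 0 ≤ lam x := fun x hx => by
    have := hw0 x hx; positivity
  have hsum_lam : ∑ x ∈ t, lam x = (n : ℝ) := by
    rw [← Finset.mul_sum, hw1, mul_one]
  set c : (Fin N → ℝ) → ℕ := fun x => ⌊lam x⌋₊ with hc_def
  have hcle : ∀ x ∈ t, (c x : ℝ) ≤ lam x := fun x hx => Nat.floor_le (hlam0 x hx)
  have hclt : ∀ x ∈ t, lam x < (c x : ℝ) + 1 := fun x _ => Nat.lt_floor_add_one _
  set S : ℕ := ∑ x ∈ t, c x with hS_def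
  have hScast : (S : ℝ) = ∑ x ∈ t, (c x : ℝ) := by rw [hS_def]; push_cast; rfl
  have hSn : S ≤ n := by
    have : (S : ℝ) ≤ (n : ℝ) := by
      rw [hScast, ← hsum_lam]
      exact Finset.sum_le_sum hcle
    exact_mod_cast this
  set R : ℕ := n - S with hR_def
  have hRS : S + R = n := by omega
  have hRcast : (R : ℝ) = (n : ℝ) - (S : ℝ) := by
    rw [hR_def]; push_cast [Nat.cast_sub hSn]; ring
  have hfrac_sum : ∑ x ∈ t, (lam x - (c x : ℝ)) = (R : ℝ) := by
    rw [Finset.sum_sub_distrib, hsum_lam, ← hScast, hRcast]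
  have hRd : R ≤ d := by
    have hlt : (R : ℝ) < (d : ℝ) + 1 := by
      calc (R : ℝ) = ∑ x ∈ t, (lam x - (c x : ℝ)) := hfrac_sum.symm
        _ < ∑ _x ∈ t, (1 : ℝ) := by
            refine Finset.sum_lt_sum_of_nonempty htne fun x hx => ?_
            have := hclt x hx; linarith
        _ = t.card := by simp
        _ ≤ (d : ℝ) + 1 := by exact_mod_cast hcard
    have : R < d + 1 := by exact_mod_cast hlt
    omega
  -- fractional-part point
  set γ : Fin N → ℝ := (n : ℝ) • y - ∑ x ∈ t, (c x : ℝ) • x with hγ_def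
  have hαsum : (n : ℝ) • y = ∑ x ∈ t, lam x • x := by
    rw [hy_eq, Finset.smul_sum]
    refine Finset.sum_congr rfl fun x _ => ?_
    rw [smul_smul]
  have hγ_eq : γ = ∑ x ∈ t, (lam x - (c x : ℝ)) • x := by
    rw [hγ_def, hαsum, ← Finset.sum_sub_distrib]
    refine Finset.sum_congr rfl fun x _ => ?_
    rw [sub_smul]
  have hγmem : γ ∈ (R : ℝ) • convexHull ℝ (s : Set (Fin N → ℝ)) := by
    by_cases hR0 : R = 0
    · have h0 : ∀ x ∈ t, lam x - (c x : ℝ) = 0 := by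
        have := (Finset.sum_eq_zero_iff_of_nonneg
          (fun x hx => sub_nonneg.2 (hcle x hx))).mp (by rw [hfrac_sum, hR0, Nat.cast_zero])
        exact this
      have hγ0 : γ = 0 := by
        rw [hγ_eq]
        exact Finset.sum_eq_zero fun x hx => by rw [h0 x hx, zero_smul]
      rw [hR0, Nat.cast_zero, Set.zero_smul_set hPne, hγ0]
      exact Set.mem_singleton _
    · have hRpos : (0 : ℝ) < (R : ℝ) := by
        have : 0 < R := Nat.pos_of_ne_zero hR0
        exact_mod_cast this
      have hmem : t.centerMass (fun x => lam x - (c x : ℝ)) id ∈ convexHull ℝ (s : Set (Fin N → ℝ)) := by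
        refine Finset.centerMass_mem_convexHull t
          (fun x hx => sub_nonneg.2 (hcle x hx)) (by rw [hfrac_sum]; exact hRpos)
          (fun x hx => hts hx)
      refine Set.mem_smul_set.2 ⟨_, hmem, ?_⟩
      rw [Finset.centerMass, hfrac_sum, smul_inv_smul₀ (ne_of_gt hRpos), hγ_eq]
      simp only [id]
  -- the multiset of floor copies of vertices
  set M : Multiset (Fin N → ℝ) := t.1.bind fun x => Multiset.replicate (c x) x with hM_def
  have hMmem : ∀ b ∈ M, b ∈ t := by
    intro b hb
    rw [hM_def, Multiset.mem_bind] at hb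
    obtain ⟨a, ha, hba⟩ := hb
    rw [Multiset.eq_of_mem_replicate hba]
    exact ha
  have hMcard : Multiset.card M = S := by
    rw [hM_def, Multiset.card_bind, hS_def]
    simp [Function.comp]
  have hMsum : M.sum = ∑ x ∈ t, (c x : ℝ) • x := by
    rw [hM_def, Multiset.sum_bind]
    have : ∀ x : Fin N → ℝ, (Multiset.replicate (c x) x).sum = (c x : ℝ) • x := fun x => by
      rw [Multiset.sum_replicate, ← Nat.cast_smul_eq_nsmul ℝ]
    simp only [this]
    rfl
  set l' : List (Fin N → ℝ) := M.toList with hl'_def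
  have hl'len : l'.length = S := by rw [hl'_def, Multiset.length_toList, hMcard]
  have hl'sum : l'.sum = M.sum := by rw [hl'_def, Multiset.sum_toList]
  have hl'mem : ∀ b ∈ l', b ∈ t := fun b hb => hMmem b (by rwa [← Multiset.mem_toList])
  set l1 : List (Fin N → ℝ) := l'.take (n - d) with hl1_def
  set l2 : List (Fin N → ℝ) := l'.drop (n - d) with hl2_def
  have hl1len : l1.length = n - d := by
    rw [hl1_def, List.length_take, hl'len]
    omega
  have hl2len : l2.length = d - R := by
    rw [hl2_def, List.length_drop, hl'len]
    omega
  set g : Fin N → ℝ := γ + l2.sum with hg_def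
  have hconv : Convex ℝ (convexHull ℝ (s : Set (Fin N → ℝ))) := convex_convexHull ℝ _
  have hl2mem : ∀ b ∈ l2, b ∈ convexHull ℝ (s : Set (Fin N → ℝ)) := fun b hb =>
    subset_convexHull ℝ _ (hts (hl'mem b (List.drop_subset _ _ hb)))
  have hgmem : g ∈ (d : ℝ) • convexHull ℝ (s : Set (Fin N → ℝ)) := by
    have h2 : l2.sum ∈ ((d - R : ℕ) : ℝ) • convexHull ℝ (s : Set (Fin N → ℝ)) := by
      rw [← hl2len]
      exact list_sum_mem_smul' hconv hPne l2 hl2mem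
    have hsplit : ((d : ℝ)) • convexHull ℝ (s : Set (Fin N → ℝ)) =
        (R : ℝ) • convexHull ℝ (s : Set (Fin N → ℝ)) + ((d - R : ℕ) : ℝ) • convexHull ℝ (s : Set (Fin N → ℝ)) := by
      have hcast : (d : ℝ) = (R : ℝ) + ((d - R : ℕ) : ℝ) := by
        push_cast [Nat.cast_sub hRd]; ring
      rw [hcast]
      exact hconv.add_smul (by positivity) (by positivity)
    rw [hsplit, hg_def]
    exact Set.add_mem_add hγmem h2
  refine ⟨g, l1, hgmem, hl1len, fun b hb => hts (hl'mem b (List.take_subset _ _ hb)), ?_⟩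
  have hsum_split : l1.sum + l2.sum = l'.sum := by
    rw [hl1_def, hl2_def, ← List.sum_append, List.take_append_drop]
  have : (n : ℝ) • y = γ + ∑ x ∈ t, (c x : ℝ) • x := by rw [hγ_def]; abel
  rw [this, ← hMsum, ← hl'sum, ← hsum_split, hg_def]
  abel

/-- Lemma 2.5 (a): if `nᵢ ≥ dᵢ + 1` for all `i`, then every lattice point of
`n₁P₁ + ⋯ + n_mP_m` decomposes as a lattice point of `d₁P₁ + ⋯ + d_mP_m` plus, for each
`i`, a sum of `nᵢ - dᵢ` lattice points of `Pᵢ`. -/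
theorem lattice_points_of_minkowski_sum_dilations {N m : ℕ}
    (s : Fin m → Finset (Fin N → ℝ)) (hs : ∀ i, (s i).Nonempty)
    (hsint : ∀ i, ∀ x ∈ s i, ∀ j, ∃ z : ℤ, x j = (z : ℝ))
    (P : Fin m → Set (Fin N → ℝ))
    (hP : ∀ i, P i = convexHull ℝ ((s i : Set (Fin N → ℝ))))
    (d : Fin m → ℕ) (hd : ∀ i, d i = Module.finrank ℝ (affineSpan ℝ (P i)).direction)
    (n : Fin m → ℕ) (hn : ∀ i, d i + 1 ≤ n i) :
    ∀ α ∈ ∑ i, (n i : ℝ) • P i, (∀ j, ∃ z : ℤ, α j = (z : ℝ)) →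
      ∃ (α' : Fin N → ℝ) (β : (i : Fin m) → Fin (n i - d i) → (Fin N → ℝ)),
        α' ∈ ∑ i, (d i : ℝ) • P i ∧ (∀ j, ∃ z : ℤ, α' j = (z : ℝ)) ∧
        (∀ i k, β i k ∈ P i ∧ ∀ j, ∃ z : ℤ, β i k j = (z : ℝ)) ∧
        α = α' + ∑ i, ∑ k, β i k := by
  classical
  intro α hα hαint
  obtain ⟨f, hf, hfsum⟩ := mem_finset_sum_sets' Finset.univ _ α hα
  have hexists : ∀ i, ∃ (g : Fin N → ℝ) (l : List (Fin N → ℝ)),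
      g ∈ (d i : ℝ) • convexHull ℝ ((s i : Set (Fin N → ℝ))) ∧ l.length = n i - d i ∧
      (∀ b ∈ l, b ∈ s i) ∧ f i = g + l.sum := by
    intro i
    refine key_decomp' (s i) (hs i) (d i) (n i) (hn i) ?_ (f i) ?_
    · rw [← hP i]; exact (hd i).symm
    · rw [← hP i]; exact hf i (Finset.mem_univ i)
  choose g l hg hlen hmem heq using hexists
  set β : (i : Fin m) → Fin (n i - d i) → (Fin N → ℝ) :=
    fun i k => (l i).get ⟨k.1, by rw [hlen i]; exact k.isLt⟩ with hβ_def
  have hβsum : ∀ i, ∑ k, β i k = (l i).sum := by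
    intro i
    rw [← Fin.sum_univ_getElem (l i)]
    exact Fintype.sum_equiv (finCongr (hlen i)).symm _ _ fun k => rfl
  have hβmem : ∀ i k, β i k ∈ s i := fun i k =>
    hmem i _ (List.get_mem _ _)
  set α' : Fin N → ℝ := ∑ i, g i with hα'_def
  have hα'mem : α' ∈ ∑ i, (d i : ℝ) • P i := by
    rw [hα'_def]
    exact sum_mem_finset_sum_sets' Finset.univ _ _ fun i _ => by rw [hP i]; exact hg i
  have hfinal : α = α' + ∑ i, ∑ k, β i k := by
    rw [hfsum, hα'_def]
    rw [← Finset.sum_add_distrib]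
    refine Finset.sum_congr rfl fun i _ => ?_
    rw [heq i, hβsum i]
  have hβint : ∀ i k j, ∃ z : ℤ, β i k j = (z : ℝ) := fun i k j =>
    hsint i _ (hβmem i k) j
  have hα'int : ∀ j, ∃ z : ℤ, α' j = (z : ℝ) := by
    intro j
    obtain ⟨zα, hzα⟩ := hαint j
    have hsumint : ∃ z : ℤ, (∑ i, ∑ k, β i k) j = (z : ℝ) := by
      rw [Finset.sum_apply]
      refine exists_int_sum' _ _ fun i _ => ?_
      rw [Finset.sum_apply]
      exact exists_int_sum' _ _ fun k _ => hβint i k j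
    obtain ⟨zs, hzs⟩ := hsumint
    refine ⟨zα - zs, ?_⟩
    have : α' = α - ∑ i, ∑ k, β i k := by rw [hfinal]; abel
    rw [this, Pi.sub_apply, hzα, hzs]
    push_cast
    ring
  refine ⟨α', β, hα'mem, hα'int, fun i k => ⟨?_, fun j => hβint i k j⟩, hfinal⟩
  rw [hP i]
  exact subset_convexHull ℝ _ (hβmem i k)
end

section
/- Let P₁, …, P_m ⊂ ℝ^N be integral convex polytopes with d_i = dim P_i, and let n₁, …, n_m be integers with n_i ≥ d_i + 2 for all i. Then every lattice point in the relative interior of n₁P₁ + ⋯ + n_mP_m can be written as α' + ∑_i ∑_{j=1}^{n_i - d_i - 1} β_j^{(i)}, where α' is a lattice point in the relative interior of (d₁+1)P₁ + ⋯ + (d_m+1)P_m and each β_j^{(i)} ∈ P_i ∩ ℤ^N. -/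
open Pointwise Set

variable {E : Type*} [NormedAddCommGroup E] [NormedSpace ℝ E]

theorem mem_intrinsicInterior_iff' {C : Set E} {x : E} :
    x ∈ intrinsicInterior ℝ C ↔ x ∈ affineSpan ℝ C ∧
      ∃ ε > 0, ∀ y, y ∈ affineSpan ℝ C → dist y x < ε → y ∈ C := by
  constructor
  · rintro ⟨⟨u, hu⟩, hint, rfl⟩
    refine ⟨hu, ?_⟩
    rw [mem_interior_iff_mem_nhds, Metric.mem_nhds_iff] at hint
    obtain ⟨ε, hε, hball⟩ := hint
    refine ⟨ε, hε, fun y hy hdy => ?_⟩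
    have : (⟨y, hy⟩ : affineSpan ℝ C) ∈ Metric.ball (⟨u, hu⟩ : affineSpan ℝ C) ε := by
      simpa [Metric.mem_ball, Subtype.dist_eq] using hdy
    exact hball this
  · rintro ⟨hx, ε, hε, h⟩
    refine ⟨⟨x, hx⟩, ?_, rfl⟩
    rw [mem_interior_iff_mem_nhds, Metric.mem_nhds_iff]
    exact ⟨ε, hε, fun z hz => h z z.2 (by simpa [Metric.mem_ball, Subtype.dist_eq] using hz)⟩

/-- combination of a relint point and a point of the set, with positive weight on the
relint point, is in the relint. -/
theorem combo_mem_intrinsicInterior {C : Set E} (hC : Convex ℝ C) {x y : E}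
    (hx : x ∈ intrinsicInterior ℝ C) (hy : y ∈ C) {t : ℝ} (ht0 : 0 < t) (ht1 : t ≤ 1) :
    (1 - t) • y + t • x ∈ intrinsicInterior ℝ C := by
  rw [mem_intrinsicInterior_iff'] at hx ⊢
  obtain ⟨hxs, ε, hε, hball⟩ := hx
  have hys : y ∈ affineSpan ℝ C := subset_affineSpan ℝ C hy
  have hzs : (1 - t) • y + t • x ∈ affineSpan ℝ C := by
    have h1 := AffineSubspace.smul_vsub_vadd_mem (affineSpan ℝ C) t hxs hys hys
    have h2 : t • (x -ᵥ y) +ᵥ y = (1 - t) • y + t • x := by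
      simp only [vsub_eq_sub, vadd_eq_add]; module
    rwa [h2] at h1
  refine ⟨hzs, t * ε, by positivity, fun w hw hdw => ?_⟩
  set x' := x + t⁻¹ • (w - ((1 - t) • y + t • x)) with hx'def
  have hx's : x' ∈ affineSpan ℝ C := by
    have hdir : w -ᵥ ((1 - t) • y + t • x) ∈ (affineSpan ℝ C).direction :=
      AffineSubspace.vsub_mem_direction hw hzs
    have h1 := AffineSubspace.vadd_mem_of_mem_direction
      (Submodule.smul_mem _ t⁻¹ hdir) hxs
    have h2 : t⁻¹ • (w -ᵥ ((1 - t) • y + t • x)) +ᵥ x = x' := by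
      rw [hx'def]; simp only [vsub_eq_sub, vadd_eq_add]; module
    rwa [h2] at h1
  have hx'C : x' ∈ C := by
    apply hball x' hx's
    rw [hx'def, dist_eq_norm]
    have : x + t⁻¹ • (w - ((1 - t) • y + t • x)) - x = t⁻¹ • (w - ((1 - t) • y + t • x)) := by
      module
    rw [this, norm_smul, ← dist_eq_norm]
    rw [norm_inv, Real.norm_of_nonneg ht0.le]
    calc t⁻¹ * dist w ((1 - t) • y + t • x) < t⁻¹ * (t * ε) := by
          apply mul_lt_mul_of_pos_left hdw (by positivity)
      _ = ε := by field_simp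
  have : w = (1 - t) • y + t • x' := by
    rw [hx'def, smul_add, smul_smul, mul_inv_cancel₀ ht0.ne', one_smul]; module
  rw [this]
  exact hC hy hx'C (by linarith) ht0.le (by ring)

theorem mem_intrinsicInterior_iff_extend [FiniteDimensional ℝ E] {C : Set E}
    (hC : Convex ℝ C) (hne : C.Nonempty) {x : E} :
    x ∈ intrinsicInterior ℝ C ↔ x ∈ C ∧ ∀ y ∈ C, ∃ δ : ℝ, 0 < δ ∧ x + δ • (x - y) ∈ C := by
  constructor
  · intro hx
    refine ⟨intrinsicInterior_subset hx, fun y hy => ?_⟩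
    rw [mem_intrinsicInterior_iff'] at hx
    obtain ⟨hxs, ε, hε, hball⟩ := hx
    refine ⟨ε / (2 * (‖x - y‖ + 1)), by positivity, ?_⟩
    set δ : ℝ := ε / (2 * (‖x - y‖ + 1)) with hδ
    have hδ0 : 0 < δ := by positivity
    apply hball
    · have hys : y ∈ affineSpan ℝ C := subset_affineSpan ℝ C hy
      have hdir : x -ᵥ y ∈ (affineSpan ℝ C).direction :=
        AffineSubspace.vsub_mem_direction hxs hys
      have h1 := AffineSubspace.vadd_mem_of_mem_direction
        (Submodule.smul_mem _ δ hdir) hxs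
      simpa [vsub_eq_sub, vadd_eq_add, add_comm] using h1
    · rw [dist_eq_norm]
      have h2 : x + δ • (x - y) - x = δ • (x - y) := by module
      rw [h2, norm_smul, Real.norm_of_nonneg hδ0.le, hδ]
      rw [div_mul_eq_mul_div, div_lt_iff₀ (by positivity)]
      nlinarith [norm_nonneg (x - y), hε]
  · rintro ⟨hxC, h⟩
    obtain ⟨z₀, hz₀⟩ := hne.intrinsicInterior hC
    obtain ⟨δ, hδ0, hr⟩ := h z₀ (intrinsicInterior_subset hz₀)
    have key := combo_mem_intrinsicInterior hC hz₀ hr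
      (t := δ / (1 + δ)) (by positivity) (by rw [div_le_one (by positivity)]; linarith)
    have heq : (1 - δ / (1 + δ)) • (x + δ • (x - z₀)) + (δ / (1 + δ)) • z₀ = x := by
      have h1δ : (1 : ℝ) + δ ≠ 0 := by positivity
      rw [eq_comm, ← sub_eq_zero]
      have : (1 : ℝ) - δ / (1 + δ) = 1 / (1 + δ) := by field_simp; ring
      rw [this]
      match_scalars <;> field_simp <;> ring
    rwa [heq] at key

theorem smul_intrinsicInterior_subset [FiniteDimensional ℝ E] {C : Set E} (hC : Convex ℝ C)
    {c : ℝ} (hc : c ≠ 0) :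
    c • intrinsicInterior ℝ C ⊆ intrinsicInterior ℝ (c • C) := by
  rcases C.eq_empty_or_nonempty with rfl | hne
  · simp [intrinsicInterior_empty]
  rintro _ ⟨x, hx, rfl⟩
  rw [mem_intrinsicInterior_iff_extend hC hne] at hx
  rw [mem_intrinsicInterior_iff_extend (hC.smul c) hne.smul_set]
  obtain ⟨hxC, h⟩ := hx
  refine ⟨smul_mem_smul_set hxC, ?_⟩
  rintro _ ⟨y, hy, rfl⟩
  obtain ⟨δ, hδ, hmem⟩ := h y hy
  refine ⟨δ, hδ, ?_⟩
  have : c • x + δ • (c • x - c • y) = c • (x + δ • (x - y)) := by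
    module
  rw [this]
  exact smul_mem_smul_set hmem

theorem smul_intrinsicInterior [FiniteDimensional ℝ E] {C : Set E} (hC : Convex ℝ C)
    {c : ℝ} (hc : c ≠ 0) :
    intrinsicInterior ℝ (c • C) = c • intrinsicInterior ℝ C := by
  refine subset_antisymm ?_ (smul_intrinsicInterior_subset hC hc)
  have h2 := smul_intrinsicInterior_subset (hC.smul c) (inv_ne_zero hc) (E := E)
  rw [inv_smul_smul₀ hc] at h2
  intro x hx
  have : c • (c⁻¹ • x) ∈ c • intrinsicInterior ℝ C :=
    smul_mem_smul_set (h2 (smul_mem_smul_set hx))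
  rwa [smul_inv_smul₀ hc] at this

/-- shrink the extension coefficient -/
private lemma shrink {C : Set E} (hC : Convex ℝ C) {x y : E} (hx : x ∈ C)
    {δ δ' : ℝ} (h1 : x + δ • (x - y) ∈ C) (h2 : 0 < δ') (h3 : δ' ≤ δ) :
    x + δ' • (x - y) ∈ C := by
  have hδ : 0 < δ := lt_of_lt_of_le h2 h3
  have key := hC (a := δ' / δ) (b := 1 - δ' / δ) h1 hx
    (le_of_lt (by positivity : (0:ℝ) < δ' / δ))
    (by rw [sub_nonneg, div_le_one hδ]; exact h3) (by ring)
  have hc : (δ' / δ) • (δ • (x - y)) = δ' • (x - y) := by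
    rw [smul_smul, div_mul_cancel₀ _ hδ.ne']
  have heq : (δ' / δ) • (x + δ • (x - y)) + (1 - δ' / δ) • x = x + δ' • (x - y) := by
    rw [smul_add, hc]; module
  rwa [heq] at key

theorem add_mem_intrinsicInterior [FiniteDimensional ℝ E] {A B : Set E}
    (hA : Convex ℝ A) (hB : Convex ℝ B) (hAne : A.Nonempty) (hBne : B.Nonempty)
    {a b : E} (ha : a ∈ intrinsicInterior ℝ A) (hb : b ∈ intrinsicInterior ℝ B) :
    a + b ∈ intrinsicInterior ℝ (A + B) := by
  rw [mem_intrinsicInterior_iff_extend hA hAne] at ha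
  rw [mem_intrinsicInterior_iff_extend hB hBne] at hb
  rw [mem_intrinsicInterior_iff_extend (hA.add hB) (hAne.add hBne)]
  obtain ⟨haA, hea⟩ := ha
  obtain ⟨hbB, heb⟩ := hb
  refine ⟨add_mem_add haA hbB, ?_⟩
  rintro _ ⟨y₁, hy₁, y₂, hy₂, rfl⟩
  obtain ⟨δ₁, hδ₁, h1⟩ := hea y₁ hy₁
  obtain ⟨δ₂, hδ₂, h2⟩ := heb y₂ hy₂
  refine ⟨min δ₁ δ₂, lt_min hδ₁ hδ₂, ?_⟩
  have k1 : a + (min δ₁ δ₂) • (a - y₁) ∈ A := shrink hA haA h1 (lt_min hδ₁ hδ₂) (min_le_left _ _)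
  have k2 : b + (min δ₁ δ₂) • (b - y₂) ∈ B := shrink hB hbB h2 (lt_min hδ₁ hδ₂) (min_le_right _ _)
  have heq : (a + (min δ₁ δ₂) • (a - y₁)) + (b + (min δ₁ δ₂) • (b - y₂))
      = a + b + (min δ₁ δ₂) • (a + b - (y₁ + y₂)) := by module
  have := add_mem_add k1 k2
  rwa [heq] at this

theorem intrinsicInterior_add_subset [FiniteDimensional ℝ E] {A B : Set E}
    (hA : Convex ℝ A) (hB : Convex ℝ B) (hAne : A.Nonempty) (hBne : B.Nonempty)
    {w : E} (hw : w ∈ intrinsicInterior ℝ (A + B)) :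
    ∃ a ∈ intrinsicInterior ℝ A, ∃ b ∈ intrinsicInterior ℝ B, w = a + b := by
  obtain ⟨a₀, ha₀⟩ := hAne.intrinsicInterior hA
  obtain ⟨b₀, hb₀⟩ := hBne.intrinsicInterior hB
  rw [mem_intrinsicInterior_iff_extend (hA.add hB) (hAne.add hBne)] at hw
  obtain ⟨hwAB, hext⟩ := hw
  obtain ⟨δ, hδ, hz⟩ := hext (a₀ + b₀)
    (add_mem_add (intrinsicInterior_subset ha₀) (intrinsicInterior_subset hb₀))
  obtain ⟨a₁, ha₁, b₁, hb₁, hzeq⟩ := hz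
  set t : ℝ := δ / (1 + δ) with ht
  have h1δ : (0:ℝ) < 1 + δ := by linarith
  have ht0 : 0 < t := by positivity
  have ht1 : t ≤ 1 := by rw [ht, div_le_one h1δ]; linarith
  refine ⟨(1 - t) • a₁ + t • a₀, combo_mem_intrinsicInterior hA ha₀ ha₁ ht0 ht1,
    (1 - t) • b₁ + t • b₀, combo_mem_intrinsicInterior hB hb₀ hb₁ ht0 ht1, ?_⟩
  have hsum : ((1 - t) • a₁ + t • a₀) + ((1 - t) • b₁ + t • b₀)
      = (1 - t) • (a₁ + b₁) + t • (a₀ + b₀) := by module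
  have hzeq' : a₁ + b₁ = w + δ • (w - (a₀ + b₀)) := hzeq
  rw [hsum, hzeq']
  have h1t : (1:ℝ) - t = 1 / (1 + δ) := by rw [ht]; field_simp; ring
  rw [h1t, ht]
  match_scalars <;> field_simp <;> ring

/-- two positive convex combinations of the same finite family: if one is in the relative
interior, so is the other. -/
theorem pos_combo_mem_intrinsicInterior {C : Set E} (hC : Convex ℝ C)
    {ι : Type*} [Fintype ι] [Nonempty ι] {z : ι → E} (hz : ∀ i, z i ∈ C)
    {lam mu : ι → ℝ} (hlam : ∀ i, 0 < lam i) (hmu : ∀ i, 0 < mu i)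
    (hlam1 : ∑ i, lam i = 1) (hmu1 : ∑ i, mu i = 1)
    (hq : ∑ i, lam i • z i ∈ intrinsicInterior ℝ C) :
    ∑ i, mu i • z i ∈ intrinsicInterior ℝ C := by
  classical
  set q := ∑ i, lam i • z i
  set p := ∑ i, mu i • z i
  set ε : ℝ := Finset.univ.inf' Finset.univ_nonempty (fun i => mu i / lam i) with hε
  have hε0 : 0 < ε := by
    rw [hε, Finset.lt_inf'_iff]
    exact fun i _ => div_pos (hmu i) (hlam i)
  have hεle : ∀ i, ε * lam i ≤ mu i := by
    intro i
    exact (le_div_iff₀ (hlam i)).1 (Finset.inf'_le _ (Finset.mem_univ i))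
  -- r = (1+ε) p - ε q ∈ C
  have hrC : (1 + ε) • p - ε • q ∈ C := by
    have heq : (1 + ε) • p - ε • q = ∑ i, ((1 + ε) * mu i - ε * lam i) • z i := by
      simp only [p, q, Finset.smul_sum, smul_smul, ← Finset.sum_sub_distrib, sub_smul]
    rw [heq]
    apply hC.sum_mem
    · intro i _
      have := hεle i
      nlinarith [hmu i]
    · rw [Finset.sum_sub_distrib, ← Finset.mul_sum, ← Finset.mul_sum, hlam1, hmu1]
      ring
    · exact fun i _ => hz i
  have key := combo_mem_intrinsicInterior hC hq hrC
    (t := ε / (1 + ε)) (by positivity) (by rw [div_le_one (by positivity)]; linarith)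
  have heq2 : (1 - ε / (1 + ε)) • ((1 + ε) • p - ε • q) + (ε / (1 + ε)) • q = p := by
    have h1 : (1:ℝ) - ε / (1 + ε) = 1 / (1 + ε) := by field_simp; ring
    rw [h1]
    match_scalars <;> field_simp <;> ring
  rwa [heq2] at key

lemma convex_finsetSum {ι : Type*} {t : Finset ι} {f : ι → Set E}
    (h : ∀ i ∈ t, Convex ℝ (f i)) : Convex ℝ (∑ i ∈ t, f i) := by
  classical
  induction t using Finset.induction_on with
  | empty => rw [Finset.sum_empty, ← Set.singleton_zero]; exact convex_singleton (𝕜 := ℝ) (0 : E)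
  | insert a t ha ih =>
    rw [Finset.sum_insert ha]
    exact (h _ (Finset.mem_insert_self _ _)).add
      (ih fun i hi => h i (Finset.mem_insert_of_mem hi))

lemma nonempty_finsetSum {ι : Type*} {t : Finset ι} {f : ι → Set E}
    (h : ∀ i ∈ t, (f i).Nonempty) : (∑ i ∈ t, f i).Nonempty := by
  classical
  induction t using Finset.induction_on with
  | empty => simp
  | insert a t ha ih =>
    rw [Finset.sum_insert ha]
    exact (h _ (Finset.mem_insert_self _ _)).add
      (ih fun i hi => h i (Finset.mem_insert_of_mem hi))

lemma sum_fin_of_eq {a b : ℕ} (h : a = b) (f : Fin b → E) (g : Fin a → E)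
    (hfg : ∀ (k : Fin a) (hk : (k : ℕ) < b), g k = f ⟨k, hk⟩) :
    ∑ k, g k = ∑ k, f k := by
  subst h
  exact Finset.sum_congr rfl fun k _ => by rw [hfg k k.isLt]

lemma sum_fin_succ_eq {a b : ℕ} (h : a = b + 1) (f : Fin b → E) (v : E) (g : Fin a → E)
    (hg1 : ∀ (k : Fin a) (hk : (k : ℕ) < b), g k = f ⟨k, hk⟩)
    (hg2 : ∀ (k : Fin a), (k : ℕ) = b → g k = v) :
    ∑ k, g k = (∑ k, f k) + v := by
  subst h
  rw [Fin.sum_univ_castSucc]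
  congr 1
  · exact Finset.sum_congr rfl fun k _ => by
      rw [hg1 k.castSucc k.isLt]
      congr 1
  · exact hg2 (Fin.last b) rfl

theorem step_lemma [FiniteDimensional ℝ E] {A : Set E} (hA : Convex ℝ A) (hAne : A.Nonempty)
    (s : Finset E) (hs : (s : Set E).Nonempty) {c : ℝ} {d : ℕ}
    (hdim : Module.finrank ℝ (affineSpan ℝ (convexHull ℝ (s : Set E))).direction ≤ d)
    (hc : (d : ℝ) + 2 ≤ c) {α : E}
    (hα : α ∈ intrinsicInterior ℝ (c • convexHull ℝ (s : Set E) + A)) :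
    ∃ v ∈ s, α - v ∈ intrinsicInterior ℝ ((c - 1) • convexHull ℝ (s : Set E) + A) := by
  classical
  set P : Set E := convexHull ℝ (s : Set E) with hPdef
  have hPconv : Convex ℝ P := convex_convexHull ℝ _
  have hPne : P.Nonempty := hs.mono (subset_convexHull ℝ _)
  have hc0 : (0:ℝ) < c := by have : (0:ℝ) ≤ d := Nat.cast_nonneg d; linarith
  have hc1 : (0:ℝ) < c - 1 := by have : (0:ℝ) ≤ d := Nat.cast_nonneg d; linarith
  -- decompose α
  obtain ⟨b, hb, a, ha, hab⟩ := intrinsicInterior_add_subset (hPconv.smul c) hA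
    (hPne.smul_set) hAne hα
  -- b ∈ relint (c • P) means b = c • q, q ∈ relint P
  rw [smul_intrinsicInterior hPconv hc0.ne'] at hb
  obtain ⟨q, hq, rfl⟩ := hb
  -- Caratheodory
  obtain ⟨ι, hfin, z, w, hzs, hzi, hw0, hw1, hwz⟩ :=
    eq_pos_convex_span_of_mem_convexHull (intrinsicInterior_subset hq)
  have hne : Nonempty ι := by
    by_contra h
    rw [not_nonempty_iff] at h
    rw [Finset.univ_eq_empty, Finset.sum_empty] at hw1
    exact one_ne_zero hw1.symm
  -- card bound
  have hcard : (Fintype.card ι : ℝ) ≤ (d : ℝ) + 1 := by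
    have h1 : Fintype.card ι ≤ Module.finrank ℝ (vectorSpan ℝ (Set.range z)) + 1 :=
      hzi.card_le_finrank_succ
    have h2 : vectorSpan ℝ (Set.range z) ≤ vectorSpan ℝ P := by
      apply vectorSpan_mono
      exact hzs.trans (subset_convexHull ℝ _)
    have h3 : Module.finrank ℝ (vectorSpan ℝ (Set.range z)) ≤ d := by
      refine le_trans (Submodule.finrank_mono h2) ?_
      rwa [← direction_affineSpan]
    exact_mod_cast le_trans h1 (by omega)
  -- find j with c * w j > 1
  have hj : ∃ j, 1 < c * w j := by
    by_contra h
    push_neg at h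
    have : c = ∑ i, c * w i := by rw [← Finset.mul_sum, hw1, mul_one]
    have hle : ∑ i, c * w i ≤ ∑ _i : ι, (1:ℝ) :=
      Finset.sum_le_sum (fun i _ => h i)
    rw [Finset.sum_const, Finset.card_univ, nsmul_eq_mul, mul_one] at hle
    have : c ≤ Fintype.card ι := by linarith [this ▸ hle]
    linarith [hcard]
  obtain ⟨j, hj⟩ := hj
  refine ⟨z j, hzs ⟨j, rfl⟩, ?_⟩
  -- the new point p
  set mu : ι → ℝ := fun i => (c * w i - if i = j then 1 else 0) / (c - 1) with hmu
  have hmu0 : ∀ i, 0 < mu i := by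
    intro i
    apply div_pos _ hc1
    by_cases h : i = j
    · simp only [h, if_pos]; linarith
    · simp only [h, if_neg, not_false_iff]
      have := hw0 i
      nlinarith
  have hmu1 : ∑ i, mu i = 1 := by
    rw [hmu]
    rw [← Finset.sum_div]
    rw [Finset.sum_sub_distrib, ← Finset.mul_sum, hw1, Finset.sum_ite_eq' Finset.univ j
      (fun _ => (1:ℝ))]
    simp only [Finset.mem_univ, if_pos, mul_one]
    field_simp
  have hp : ∑ i, mu i • z i ∈ intrinsicInterior ℝ P := by
    refine pos_combo_mem_intrinsicInterior hPconv
      (fun i => (subset_convexHull ℝ _) (hzs ⟨i, rfl⟩)) hw0 hmu0 hw1 hmu1 ?_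
    rwa [hwz]
  -- c • q - z j = (c-1) • p
  have hkey : c • q - z j = (c - 1) • ∑ i, mu i • z i := by
    have hterm : ∀ i, (c - 1) • (mu i • z i)
        = (c * w i) • z i - (if i = j then (1:ℝ) else 0) • z i := by
      intro i
      rw [smul_smul]
      simp only [hmu]
      rw [mul_div_cancel₀ _ hc1.ne', sub_smul]
    have h1 : ∑ i, (c * w i) • z i = c • q := by
      rw [← hwz, Finset.smul_sum]
      simp_rw [smul_smul]
    have h2 : ∑ i, (if i = j then (1:ℝ) else 0) • z i = z j := by
      rw [Finset.sum_eq_single j]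
      · simp
      · intro i _ hij; simp [hij]
      · intro h; exact absurd (Finset.mem_univ j) h
    calc c • q - z j
        = ∑ i, ((c * w i) • z i - (if i = j then (1:ℝ) else 0) • z i) := by
          rw [Finset.sum_sub_distrib, h1, h2]
      _ = ∑ i, (c - 1) • (mu i • z i) := Finset.sum_congr rfl (fun i _ => (hterm i).symm)
      _ = (c - 1) • ∑ i, mu i • z i := (Finset.smul_sum).symm
  have hfinal : c • q - z j ∈ intrinsicInterior ℝ ((c - 1) • P) := by
    rw [hkey, smul_intrinsicInterior hPconv hc1.ne']
    exact smul_mem_smul_set hp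
  have : α - z j = (c • q - z j) + a := by rw [hab]; abel
  rw [this]
  exact add_mem_intrinsicInterior (hPconv.smul (c-1)) hA (hPne.smul_set) hAne hfinal ha

theorem aux_main {N m : ℕ}
    (s : Fin m → Finset (Fin N → ℝ)) (hs : ∀ i, (s i).Nonempty)
    (hsint : ∀ i, ∀ x ∈ s i, ∀ j, ∃ z : ℤ, x j = (z : ℝ))
    (P : Fin m → Set (Fin N → ℝ))
    (hP : ∀ i, P i = convexHull ℝ ((s i : Set (Fin N → ℝ))))
    (d : Fin m → ℕ) (hd : ∀ i, d i = Module.finrank ℝ (affineSpan ℝ (P i)).direction) :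
    ∀ (M : ℕ) (n : Fin m → ℕ), (∀ i, d i + 1 ≤ n i) → (∑ i, (n i - d i - 1)) = M →
    ∀ α ∈ intrinsicInterior ℝ (∑ i, (n i : ℝ) • P i), (∀ j, ∃ z : ℤ, α j = (z : ℝ)) →
      ∃ (α' : Fin N → ℝ) (β : (i : Fin m) → Fin (n i - d i - 1) → (Fin N → ℝ)),
        α' ∈ intrinsicInterior ℝ (∑ i, ((d i : ℝ) + 1) • P i) ∧
        (∀ j, ∃ z : ℤ, α' j = (z : ℝ)) ∧
        (∀ i k, β i k ∈ P i ∧ ∀ j, ∃ z : ℤ, β i k j = (z : ℝ)) ∧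
        α = α' + ∑ i, ∑ k, β i k := by
  classical
  have hPconv : ∀ i, Convex ℝ (P i) := fun i => (hP i) ▸ convex_convexHull ℝ _
  have hPne : ∀ i, (P i).Nonempty := fun i =>
    (hP i) ▸ ((Finset.coe_nonempty.2 (hs i)).mono (subset_convexHull ℝ _))
  intro M
  induction M with
  | zero =>
    intro n hn hsum α hα hlat
    have hni : ∀ i, n i = d i + 1 := by
      intro i
      have h0 : n i - d i - 1 = 0 := by
        by_contra h
        have : 0 < ∑ i, (n i - d i - 1) :=
          Finset.sum_pos' (fun _ _ => Nat.zero_le _) ⟨i, Finset.mem_univ i, Nat.pos_of_ne_zero h⟩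
        omega
      have := hn i
      omega
    have hseteq : ∑ i, (n i : ℝ) • P i = ∑ i, ((d i : ℝ) + 1) • P i := by
      refine Finset.sum_congr rfl fun i _ => ?_
      have : (n i : ℝ) = (d i : ℝ) + 1 := by rw [hni i]; push_cast; ring
      rw [this]
    rw [hseteq] at hα
    refine ⟨α, fun i k => 0, hα, hlat, ?_, ?_⟩
    · intro i k
      exact absurd k.isLt (by simp [hni i])
    · simp
  | succ M ih =>
    intro n hn hsum α hα hlat
    have hex : ∃ i₀, d i₀ + 2 ≤ n i₀ := by
      by_contra h
      push_neg at h
      have : ∑ i, (n i - d i - 1) = 0 := by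
        apply Finset.sum_eq_zero
        intro i _
        have h1 := hn i
        have h2 := h i
        omega
      omega
    obtain ⟨i₀, hi₀⟩ := hex
    set A : Set (Fin N → ℝ) := ∑ i ∈ Finset.univ.erase i₀, (n i : ℝ) • P i with hAdef
    have hAconv : Convex ℝ A := convex_finsetSum fun i _ => (hPconv i).smul _
    have hAne : A.Nonempty := nonempty_finsetSum fun i _ => ((hPne i).smul_set)
    have hsplit : ∑ i, (n i : ℝ) • P i = (n i₀ : ℝ) • P i₀ + A :=
      (Finset.add_sum_erase _ _ (Finset.mem_univ i₀)).symm
    rw [hsplit, hP i₀] at hα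
    have hdim : Module.finrank ℝ
        (affineSpan ℝ (convexHull ℝ (↑(s i₀) : Set (Fin N → ℝ)))).direction ≤ d i₀ := by
      rw [← hP i₀]
      exact le_of_eq (hd i₀).symm
    have hc2 : (d i₀ : ℝ) + 2 ≤ (n i₀ : ℝ) := by exact_mod_cast hi₀
    obtain ⟨v, hvs, hv⟩ := step_lemma hAconv hAne (s i₀) (Finset.coe_nonempty.2 (hs i₀))
      hdim hc2 hα
    set n' : Fin m → ℕ := Function.update n i₀ (n i₀ - 1) with hn'def
    have hn'i₀ : n' i₀ = n i₀ - 1 := Function.update_self _ _ _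
    have hn'ne : ∀ i, i ≠ i₀ → n' i = n i := fun i h => Function.update_of_ne h _ _
    have hcast : ((n i₀ : ℝ) - 1) = ((n' i₀ : ℕ) : ℝ) := by
      rw [hn'i₀]
      have : 1 ≤ n i₀ := by omega
      push_cast [this]
      ring
    have hsplit' : ∑ i, (n' i : ℝ) • P i = ((n i₀ : ℝ) - 1) • convexHull ℝ (↑(s i₀)) + A := by
      rw [← Finset.add_sum_erase _ _ (Finset.mem_univ i₀), hcast, hP i₀]
      congr 1
      exact Finset.sum_congr rfl fun i hi => by rw [hn'ne i (Finset.ne_of_mem_erase hi)]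
    rw [← hsplit'] at hv
    have hn' : ∀ i, d i + 1 ≤ n' i := by
      intro i
      by_cases h : i = i₀
      · subst h; rw [hn'i₀]; omega
      · rw [hn'ne i h]; exact hn i
    have hsum' : ∑ i, (n' i - d i - 1) = M := by
      have e1 := Finset.add_sum_erase Finset.univ (fun i => n i - d i - 1) (Finset.mem_univ i₀)
      have e2 := Finset.add_sum_erase Finset.univ (fun i => n' i - d i - 1) (Finset.mem_univ i₀)
      have e3 : ∑ i ∈ Finset.univ.erase i₀, (n' i - d i - 1)
          = ∑ i ∈ Finset.univ.erase i₀, (n i - d i - 1) :=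
        Finset.sum_congr rfl fun i hi => by rw [hn'ne i (Finset.ne_of_mem_erase hi)]
      rw [e3] at e2
      rw [← e2] at *
      omega
    have hlat' : ∀ j, ∃ z : ℤ, (α - v) j = (z : ℝ) := by
      intro j
      obtain ⟨z₁, hz₁⟩ := hlat j
      obtain ⟨z₂, hz₂⟩ := hsint i₀ v hvs j
      exact ⟨z₁ - z₂, by simp [hz₁, hz₂]⟩
    obtain ⟨α', β', hα', hlatα', hβ', heq⟩ := ih n' hn' hsum' (α - v) hv hlat'
    have hab : n i₀ - d i₀ - 1 = (n' i₀ - d i₀ - 1) + 1 := by rw [hn'i₀]; omega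
    set β : (i : Fin m) → Fin (n i - d i - 1) → (Fin N → ℝ) := fun i =>
      if h : i = i₀ then
        (fun k => if hk : (k : ℕ) < n' i₀ - d i₀ - 1 then
          β' i₀ ⟨k, hk⟩ else v)
      else fun k => β' i ⟨k, by rw [hn'ne i h]; exact k.isLt⟩
      with hβdef
    refine ⟨α', β, hα', hlatα', ?_, ?_⟩
    · intro i k
      by_cases h : i = i₀
      · subst h
        simp only [hβdef, dif_pos rfl]
        by_cases hk : (k : ℕ) < n' i - d i - 1
        · rw [dif_pos hk]; exact hβ' i _
        · rw [dif_neg hk]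
          exact ⟨(hP i) ▸ subset_convexHull ℝ _ hvs, hsint i v hvs⟩
      · simp only [hβdef, dif_neg h]
        exact hβ' i _
    · have hsum2 : ∑ i, ∑ k, β i k = (∑ i, ∑ k, β' i k) + v := by
        have e1 : ∑ i, ∑ k, β i k
            = (∑ k, β i₀ k) + ∑ i ∈ Finset.univ.erase i₀, ∑ k, β i k :=
          (Finset.add_sum_erase _ (fun i => ∑ k, β i k) (Finset.mem_univ i₀)).symm
        have e2 : ∑ i, ∑ k, β' i k
            = (∑ k, β' i₀ k) + ∑ i ∈ Finset.univ.erase i₀, ∑ k, β' i k :=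
          (Finset.add_sum_erase _ (fun i => ∑ k, β' i k) (Finset.mem_univ i₀)).symm
        have e3 : ∑ i ∈ Finset.univ.erase i₀, ∑ k, β i k
            = ∑ i ∈ Finset.univ.erase i₀, ∑ k, β' i k := by
          refine Finset.sum_congr rfl fun i hi => ?_
          have h := Finset.ne_of_mem_erase hi
          refine sum_fin_of_eq (by rw [hn'ne i h]) (β' i) _ fun k hk => ?_
          simp only [hβdef, dif_neg h]
        have e4 : ∑ k, β i₀ k = (∑ k, β' i₀ k) + v := by
          refine sum_fin_succ_eq hab (β' i₀) v _ (fun k hk => ?_) (fun k hk => ?_)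
          · simp only [hβdef, dif_pos rfl, dif_pos hk]
          · simp only [hβdef, dif_pos rfl, dif_neg (by omega : ¬ ((k:ℕ) < n' i₀ - d i₀ - 1))]
        calc ∑ i, ∑ k, β i k
            = (∑ k, β i₀ k) + ∑ i ∈ Finset.univ.erase i₀, ∑ k, β i k := e1
          _ = ((∑ k, β' i₀ k) + v) + ∑ i ∈ Finset.univ.erase i₀, ∑ k, β' i k := by
              rw [e3, e4]
          _ = (∑ i, ∑ k, β' i k) + v := by rw [e2]; abel
      rw [hsum2, ← add_assoc, ← heq]
      abel


/-- Lemma 2.5 (b): if `nᵢ ≥ dᵢ + 2` for all `i`, then every lattice point in the relative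
interior of `n₁P₁ + ⋯ + n_mP_m` decomposes as a lattice point of the relative interior of
`(d₁+1)P₁ + ⋯ + (d_m+1)P_m` plus, for each `i`, a sum of `nᵢ - dᵢ - 1` lattice points of `Pᵢ`. -/
theorem interior_lattice_points_of_minkowski_sum_dilations {N m : ℕ}
    (s : Fin m → Finset (Fin N → ℝ)) (hs : ∀ i, (s i).Nonempty)
    (hsint : ∀ i, ∀ x ∈ s i, ∀ j, ∃ z : ℤ, x j = (z : ℝ))
    (P : Fin m → Set (Fin N → ℝ))
    (hP : ∀ i, P i = convexHull ℝ ((s i : Set (Fin N → ℝ))))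
    (d : Fin m → ℕ) (hd : ∀ i, d i = Module.finrank ℝ (affineSpan ℝ (P i)).direction)
    (n : Fin m → ℕ) (hn : ∀ i, d i + 2 ≤ n i) :
    ∀ α ∈ intrinsicInterior ℝ (∑ i, (n i : ℝ) • P i), (∀ j, ∃ z : ℤ, α j = (z : ℝ)) →
      ∃ (α' : Fin N → ℝ) (β : (i : Fin m) → Fin (n i - d i - 1) → (Fin N → ℝ)),
        α' ∈ intrinsicInterior ℝ (∑ i, ((d i : ℝ) + 1) • P i) ∧
        (∀ j, ∃ z : ℤ, α' j = (z : ℝ)) ∧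
        (∀ i k, β i k ∈ P i ∧ ∀ j, ∃ z : ℤ, β i k j = (z : ℝ)) ∧
        α = α' + ∑ i, ∑ k, β i k := by
  intro α hα hlat
  exact aux_main s hs hsint P hP d hd (∑ i, (n i - d i - 1)) n
    (fun i => by have := hn i; omega) rfl α hα hlat
end

section
/- Let P₁, …, P_m ⊂ ℝ^N be integral convex polytopes with d_i = dim P_i, and let n₁, …, n_m be positive integers with n_i ≥ d_i for all i. Then the Minkowski sum Q = n₁P₁ + ⋯ + n_mP_m has the integer decomposition property: for every positive integer k and every α ∈ kQ ∩ ℤ^N, there exist α₁, …, α_k ∈ Q ∩ ℤ^N with α = α₁ + ⋯ + α_k. -/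
open Pointwise


lemma idp_step {N : ℕ} (s : Finset (Fin N → ℝ)) (d t : ℕ)
    (hd : Module.finrank ℝ (vectorSpan ℝ (s : Set (Fin N → ℝ))) ≤ d)
    (ht1 : d + 1 ≤ t) (ht2 : 2 ≤ t) (y : Fin N → ℝ)
    (hy : y ∈ convexHull ℝ (s : Set (Fin N → ℝ))) :
    ∃ v ∈ s, ∃ y' ∈ convexHull ℝ (s : Set (Fin N → ℝ)),
      (t : ℝ) • y = v + ((t : ℝ) - 1) • y' := by
  classical
  rw [convexHull_eq_union] at hy
  simp only [Set.mem_iUnion, exists_prop] at hy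
  obtain ⟨F, hFs, hFai, hyF⟩ := hy
  have hcard : F.card ≤ d + 1 := by
    have h1 := hFai.card_le_finrank_succ
    simp only [Fintype.card_coe] at h1
    have h2 : vectorSpan ℝ (Set.range (Subtype.val : {x // x ∈ F} → (Fin N → ℝ)))
        ≤ vectorSpan ℝ (s : Set (Fin N → ℝ)) :=
      vectorSpan_mono ℝ (by rw [Subtype.range_coe]; exact hFs)
    have h3 := Submodule.finrank_mono h2
    omega
  rw [Finset.convexHull_eq] at hyF
  obtain ⟨w, hw0, hw1, hwy⟩ := hyF
  rw [Finset.centerMass_eq_of_sum_1 _ _ hw1] at hwy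
  have hFne : F.Nonempty := Finset.nonempty_of_ne_empty (by rintro rfl; simp at hw1)
  have htR : (2 : ℝ) ≤ (t : ℝ) := by exact_mod_cast ht2
  have htpos : (0 : ℝ) < (t : ℝ) - 1 := by linarith
  obtain ⟨v, hvF, hv1⟩ : ∃ v ∈ F, 1 ≤ (t : ℝ) * w v := by
    by_contra h
    push_neg at h
    have heq : ((t : ℝ)) = ∑ x ∈ F, (t : ℝ) * w x := by
      rw [← Finset.mul_sum, hw1, mul_one]
    have hlt : ∑ x ∈ F, (t : ℝ) * w x < ∑ _x ∈ F, (1 : ℝ) :=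
      Finset.sum_lt_sum_of_nonempty hFne (fun x hx => h x hx)
    rw [Finset.sum_const, nsmul_eq_mul, mul_one] at hlt
    have h4 : (t : ℝ) < (F.card : ℝ) := heq ▸ hlt
    have h5 : (F.card : ℝ) ≤ (t : ℝ) := by
      exact_mod_cast le_trans hcard ht1
    linarith
  set lam : (Fin N → ℝ) → ℝ := fun x => (t : ℝ) * w x - if x = v then 1 else 0 with hlam
  have hlam0 : ∀ x ∈ F, 0 ≤ lam x := by
    intro x hx
    by_cases hxv : x = v
    · subst hxv; simp only [hlam, if_true]; linarith
    · simp only [hlam, if_neg hxv, sub_zero]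
      exact mul_nonneg (by positivity) (hw0 x hx)
  have hlamsum : ∑ x ∈ F, lam x = (t : ℝ) - 1 := by
    simp only [hlam]
    rw [Finset.sum_sub_distrib, ← Finset.mul_sum, hw1, mul_one, Finset.sum_ite_eq' F v fun _ => (1:ℝ)]
    rw [if_pos hvF]
  refine ⟨v, hFs hvF, F.centerMass lam id,
    Finset.centerMass_mem_convexHull _ hlam0 (by rw [hlamsum]; exact htpos)
      (fun x hx => hFs hx), ?_⟩
  have hcm : ((t : ℝ) - 1) • F.centerMass lam id = ∑ x ∈ F, lam x • x := by
    rw [Finset.centerMass, hlamsum, smul_smul, mul_inv_cancel₀ (ne_of_gt htpos), one_smul]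
    rfl
  have hsum : ∑ x ∈ F, lam x • x = (t : ℝ) • y - v := by
    simp only [hlam, sub_smul, ite_smul, one_smul, zero_smul]
    rw [Finset.sum_sub_distrib]
    congr 1
    · rw [← hwy, Finset.smul_sum]
      exact Finset.sum_congr rfl fun x _ => by rw [smul_smul]; rfl
    · rw [Finset.sum_ite_eq' F v fun x => x, if_pos hvF]
  rw [hcm, hsum]
  abel

lemma idp_peel {N m : ℕ} (s : Fin m → Finset (Fin N → ℝ))
    (hs : ∀ i, (s i).Nonempty)
    (hsint : ∀ i, ∀ x ∈ s i, ∀ j, ∃ z : ℤ, x j = (z : ℝ))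
    (d : Fin m → ℕ)
    (hd : ∀ i, Module.finrank ℝ (vectorSpan ℝ ((s i) : Set (Fin N → ℝ))) ≤ d i)
    (c : Fin m → ℕ) (hc1 : ∀ i, 1 ≤ c i) (hcd : ∀ i, d i ≤ c i) :
    ∀ R : ℕ, ∀ r : Fin m → ℕ, (∑ i, r i) = R → ∀ α : Fin N → ℝ,
      (∃ y : Fin m → Fin N → ℝ, (∀ i, y i ∈ convexHull ℝ ((s i) : Set (Fin N → ℝ))) ∧
        α = ∑ i, ((c i + r i : ℕ) : ℝ) • y i) →
      ∃ g : Fin m → Fin N → ℝ,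
        (∀ i, ∀ j, ∃ z : ℤ, g i j = (z : ℝ)) ∧
        (∀ i, ∃ y ∈ convexHull ℝ ((s i) : Set (Fin N → ℝ)), g i = ((r i : ℕ) : ℝ) • y) ∧
        (∃ y : Fin m → Fin N → ℝ, (∀ i, y i ∈ convexHull ℝ ((s i) : Set (Fin N → ℝ))) ∧
          α - ∑ i, g i = ∑ i, ((c i : ℕ) : ℝ) • y i) := by
  classical
  intro R
  induction R with
  | zero =>
    intro r hr α ⟨y, hy, hα⟩
    have hr0 : ∀ i, r i = 0 := by
      intro i
      have := Finset.sum_eq_zero_iff.mp hr i (Finset.mem_univ i)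
      exact this
    refine ⟨fun _ => 0, fun i j => ⟨0, by simp⟩, ?_, ⟨y, hy, ?_⟩⟩
    · intro i
      obtain ⟨x, hx⟩ := hs i
      exact ⟨x, subset_convexHull ℝ _ hx, by rw [hr0 i]; simp⟩
    · rw [hα]
      simp only [Finset.sum_const_zero, sub_zero]
      exact Finset.sum_congr rfl fun i _ => by rw [hr0 i]; norm_num
  | succ R ih =>
    intro r hr α ⟨y, hy, hα⟩
    obtain ⟨i, hi⟩ : ∃ i, r i ≠ 0 := by
      by_contra h
      push_neg at h
      rw [Finset.sum_eq_zero (fun i _ => h i)] at hr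
      omega
    have hri : 1 ≤ r i := Nat.one_le_iff_ne_zero.mpr hi
    obtain ⟨v, hv, y'', hy'', heq⟩ := idp_step (s i) (d i) (c i + r i) (hd i)
      (by have := hcd i; omega) (by have := hc1 i; omega) (y i) (hy i)
    set r' : Fin m → ℕ := Function.update r i (r i - 1) with hr'def
    have hr'sum : ∑ l, r' l = R := by
      have h1 : ∑ l, r' l = (r i - 1) + ∑ l ∈ Finset.univ \ {i}, r l :=
        Finset.sum_update_of_mem (Finset.mem_univ i) r (r i - 1)
      have h2 : r i + ∑ l ∈ Finset.univ \ {i}, r l = R + 1 := by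
        rw [← Finset.erase_eq, Finset.add_sum_erase _ r (Finset.mem_univ i)]
        exact hr
      omega
    have hcast : ((c i + (r i - 1) : ℕ) : ℝ) = ((c i + r i : ℕ) : ℝ) - 1 := by
      have : c i + (r i - 1) = (c i + r i) - 1 := by omega
      rw [this, Nat.cast_sub (by omega)]
      simp
    have hα' : α - v = ∑ l, ((c l + r' l : ℕ) : ℝ) • (Function.update y i y'') l := by
      have hfun : (fun l => ((c l + r' l : ℕ) : ℝ) • (Function.update y i y'') l) =
          Function.update (fun l => ((c l + r l : ℕ) : ℝ) • y l) i
            (((c i + (r i - 1) : ℕ) : ℝ) • y'') := by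
        funext l
        by_cases hl : l = i
        · subst hl; simp [hr'def]
        · simp [hr'def, Function.update_of_ne hl]
      rw [hfun, Finset.sum_update_of_mem (Finset.mem_univ i)]
      have hαsplit : α = ((c i + r i : ℕ) : ℝ) • y i +
          ∑ l ∈ Finset.univ \ {i}, ((c l + r l : ℕ) : ℝ) • y l := by
        rw [hα, ← Finset.erase_eq, ← Finset.add_sum_erase _ _ (Finset.mem_univ i)]
      rw [hαsplit, heq, hcast]
      abel
    obtain ⟨g', hg'int, hg', y₂, hy₂, hrem⟩ := ih r' hr'sum (α - v)
      ⟨Function.update y i y'', fun l => by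
        by_cases hl : l = i
        · subst hl; simpa using hy''
        · rw [Function.update_of_ne hl]; exact hy l, hα'⟩
    set g : Fin m → Fin N → ℝ := Function.update g' i (g' i + v) with hgdef
    have hgsum : ∑ l, g l = (∑ l, g' l) + v := by
      rw [hgdef, Finset.sum_update_of_mem (Finset.mem_univ i)]
      rw [← Finset.erase_eq, ← Finset.add_sum_erase _ g' (Finset.mem_univ i)]
      abel
    refine ⟨g, ?_, ?_, ⟨y₂, hy₂, ?_⟩⟩
    · intro l j
      by_cases hl : l = i
      · subst hl
        rw [hgdef, Function.update_self]
        obtain ⟨z1, hz1⟩ := hg'int l j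
        obtain ⟨z2, hz2⟩ := hsint l v hv j
        exact ⟨z1 + z2, by push_cast [Pi.add_apply, hz1, hz2]; ring⟩
      · rw [hgdef, Function.update_of_ne hl]
        exact hg'int l j
    · intro l
      by_cases hl : l = i
      · subst hl
        obtain ⟨y₀, hy₀, hg'l⟩ := hg' l
        have hrr : (1 : ℝ) ≤ ((r l : ℕ) : ℝ) := by exact_mod_cast hri
        have hrne : ((r l : ℕ) : ℝ) ≠ 0 := by linarith
        set rr := ((r l : ℕ) : ℝ)
        have hvhull : v ∈ convexHull ℝ ((s l) : Set (Fin N → ℝ)) :=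
          subset_convexHull ℝ _ hv
        have hcomb : (rr - 1) / rr + 1 / rr = 1 := by field_simp; ring
        have hy₁ : ((rr - 1) / rr) • y₀ + (1 / rr) • v ∈
            convexHull ℝ ((s l) : Set (Fin N → ℝ)) :=
          (convex_convexHull ℝ _) hy₀ hvhull
            (div_nonneg (by linarith) (by linarith))
            (div_nonneg (by linarith) (by linarith)) hcomb
        refine ⟨_, hy₁, ?_⟩
        rw [hgdef, Function.update_self, smul_add, smul_smul, smul_smul]
        have e1 : rr * ((rr - 1) / rr) = rr - 1 := by field_simp
        have e2 : rr * (1 / rr) = 1 := by field_simp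
        rw [e1, e2, one_smul, hg'l]
        have : ((r' l : ℕ) : ℝ) = rr - 1 := by
          rw [hr'def, Function.update_self, Nat.cast_sub hri]
          simp
          rfl
        rw [this]
      · rw [hgdef, Function.update_of_ne hl]
        obtain ⟨y₀, hy₀, hg'l⟩ := hg' l
        refine ⟨y₀, hy₀, ?_⟩
        rw [hg'l, hr'def, Function.update_of_ne hl]
    · rw [hgsum]
      rw [← hrem]
      abel

/-- Theorem 2.3 (a): if `nᵢ ≥ dᵢ` (and `nᵢ ≥ 1`) for all `i`, then the Minkowski sum
`Q = n₁P₁ + ⋯ + n_mP_m` of integral convex polytopes has the integer decomposition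
property. -/
theorem minkowski_sum_idp {N m : ℕ}
    (s : Fin m → Finset (Fin N → ℝ)) (hs : ∀ i, (s i).Nonempty)
    (hsint : ∀ i, ∀ x ∈ s i, ∀ j, ∃ z : ℤ, x j = (z : ℝ))
    (P : Fin m → Set (Fin N → ℝ))
    (hP : ∀ i, P i = convexHull ℝ ((s i : Set (Fin N → ℝ))))
    (d : Fin m → ℕ) (hd : ∀ i, d i = Module.finrank ℝ (affineSpan ℝ (P i)).direction)
    (n : Fin m → ℕ) (hnpos : ∀ i, 0 < n i) (hn : ∀ i, d i ≤ n i)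
    (Q : Set (Fin N → ℝ)) (hQ : Q = ∑ i, (n i : ℝ) • P i) :
    ∀ k : ℕ, 0 < k → ∀ α ∈ (k : ℝ) • Q, (∀ j, ∃ z : ℤ, α j = (z : ℝ)) →
      ∃ f : Fin k → (Fin N → ℝ),
        (∀ t, f t ∈ Q ∧ ∀ j, ∃ z : ℤ, f t j = (z : ℝ)) ∧ α = ∑ t, f t := by
  classical
  have hd' : ∀ i, Module.finrank ℝ (vectorSpan ℝ ((s i) : Set (Fin N → ℝ))) ≤ d i := by
    intro i
    have h : (affineSpan ℝ (P i)).direction = vectorSpan ℝ ((s i) : Set (Fin N → ℝ)) := by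
      rw [hP i, affineSpan_convexHull, direction_affineSpan]
    rw [hd i, h]
  have hQmem : ∀ β : Fin N → ℝ, (∃ y : Fin m → Fin N → ℝ,
      (∀ i, y i ∈ convexHull ℝ ((s i) : Set (Fin N → ℝ))) ∧
        β = ∑ i, ((n i : ℕ) : ℝ) • y i) → β ∈ Q := by
    rintro β ⟨y, hy, rfl⟩
    rw [hQ, Set.mem_fintype_sum]
    refine ⟨fun i => ((n i : ℕ) : ℝ) • y i, fun i => ?_, rfl⟩
    rw [hP i]
    exact Set.smul_mem_smul_set (hy i)
  have H : ∀ K : ℕ, ∀ β : Fin N → ℝ,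
      (∃ y : Fin m → Fin N → ℝ, (∀ i, y i ∈ convexHull ℝ ((s i) : Set (Fin N → ℝ))) ∧
        β = ∑ i, (((K + 1) * n i : ℕ) : ℝ) • y i) →
      (∀ j, ∃ z : ℤ, β j = (z : ℝ)) →
      ∃ f : Fin (K + 1) → (Fin N → ℝ),
        (∀ t, f t ∈ Q ∧ ∀ j, ∃ z : ℤ, f t j = (z : ℝ)) ∧ β = ∑ t, f t := by
    intro K
    induction K with
    | zero =>
      rintro β ⟨y, hy, hβ⟩ hint
      refine ⟨fun _ => β, fun t => ⟨?_, hint⟩, ?_⟩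
      · refine hQmem β ⟨y, hy, ?_⟩
        rw [hβ]
        exact Finset.sum_congr rfl fun i _ => by norm_num
      · simp
    | succ K ih =>
      rintro β ⟨y, hy, hβ⟩ hint
      obtain ⟨g, hgint, hg, y₂, hy₂, hrem⟩ := idp_peel s hs hsint d hd'
        (fun i => (K + 1) * n i)
        (fun i => Nat.one_le_iff_ne_zero.mpr
          (Nat.mul_ne_zero (Nat.succ_ne_zero K) (Nat.pos_iff_ne_zero.mp (hnpos i))))
        (fun i => le_trans (hn i) (Nat.le_mul_of_pos_left _ (Nat.succ_pos K)))
        (∑ i, n i) n rfl β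
        ⟨y, hy, by
          rw [hβ]
          exact Finset.sum_congr rfl fun i _ => by
            have : (K + 1) * n i + n i = (K + 1 + 1) * n i := by ring
            rw [this]⟩
      set γ : Fin N → ℝ := ∑ i, g i with hγdef
      have hγint : ∀ j, ∃ z : ℤ, γ j = (z : ℝ) := by
        intro j
        choose z hz using fun i => hgint i j
        refine ⟨∑ i, z i, ?_⟩
        rw [hγdef, Finset.sum_apply]
        push_cast
        exact Finset.sum_congr rfl fun i _ => hz i
      have hγQ : γ ∈ Q := by
        choose y₃ hy₃ hgy using hg
        exact hQmem γ ⟨y₃, hy₃, Finset.sum_congr rfl fun i _ => hgy i⟩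
      have hremint : ∀ j, ∃ z : ℤ, (β - γ) j = (z : ℝ) := by
        intro j
        obtain ⟨z1, hz1⟩ := hint j
        obtain ⟨z2, hz2⟩ := hγint j
        exact ⟨z1 - z2, by push_cast [Pi.sub_apply, hz1, hz2]; ring⟩
      obtain ⟨f', hf', hsum'⟩ := ih (β - γ) ⟨y₂, hy₂, hrem⟩ hremint
      refine ⟨Fin.cons γ f', ?_, ?_⟩
      · intro t
        refine Fin.cases ?_ ?_ t
        · exact ⟨hγQ, hγint⟩
        · intro t'
          simpa using hf' t'
      · rw [Fin.sum_cons, ← hsum']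
        abel
  intro k hk α hα hαint
  obtain ⟨K, rfl⟩ : ∃ K, k = K + 1 := ⟨k - 1, by omega⟩
  rw [hQ] at hα
  obtain ⟨q, hq, hqα⟩ := Set.mem_smul_set.mp hα
  rw [Set.mem_fintype_sum] at hq
  obtain ⟨g, hg, hgq⟩ := hq
  have hg2 : ∀ i, ∃ yy, yy ∈ convexHull ℝ ((s i) : Set (Fin N → ℝ)) ∧
      ((n i : ℕ) : ℝ) • yy = g i := by
    intro i
    have := hg i
    rw [hP i] at this
    exact Set.mem_smul_set.mp this
  choose y hy hyg using hg2
  refine H K α ⟨y, hy, ?_⟩ hαint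
  rw [← hqα, ← hgq, Finset.smul_sum]
  exact Finset.sum_congr rfl fun i _ => by
    rw [Nat.cast_mul, ← smul_smul, hyg i]
end

section
/- If P ⊂ ℝ^N is an integral convex polytope of dimension d and n ≥ d − 1 is a positive integer, then the dilation nP has the integer decomposition property. -/
open Pointwise

/-- Integrality of a vector. -/
def BGT_IsInt {N : ℕ} (x : Fin N → ℝ) : Prop := ∃ q : Fin N → ℤ, x = fun j => (q j : ℝ)

lemma BGT_isInt_iff {N : ℕ} (x : Fin N → ℝ) :
    BGT_IsInt x ↔ ∀ j, ∃ z : ℤ, x j = (z : ℝ) := by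
  constructor
  · rintro ⟨q, rfl⟩ j; exact ⟨q j, rfl⟩
  · intro h; exact ⟨fun j => (h j).choose, funext fun j => (h j).choose_spec⟩

lemma BGT_isInt_sub {N : ℕ} {x y : Fin N → ℝ} (hx : BGT_IsInt x) (hy : BGT_IsInt y) :
    BGT_IsInt (x - y) := by
  obtain ⟨q, rfl⟩ := hx; obtain ⟨p, rfl⟩ := hy
  exact ⟨q - p, by funext j; simp⟩

lemma BGT_isInt_comb {N M : ℕ} (g : Fin M → ℤ) (v : Fin M → (Fin N → ℝ))
    (hv : ∀ i, BGT_IsInt (v i)) : BGT_IsInt (∑ i, ((g i : ℝ)) • v i) := by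
  choose q hq using hv
  refine ⟨fun j => ∑ i, g i * q i j, funext fun j => ?_⟩
  rw [Finset.sum_apply]
  push_cast
  exact Finset.sum_congr rfl fun i _ => by rw [hq i]; simp

/-- A nonnegative combination with total `r` lies in `r •` the convex hull. -/
lemma BGT_mem_smul_hull {N M : ℕ} (hM : 0 < M) (v : Fin M → (Fin N → ℝ))
    {a : Fin M → ℝ} (ha : ∀ i, 0 ≤ a i) {r : ℝ} (hr : 0 < r) (hsum : ∑ i, a i = r) :
    (∑ i, a i • v i) ∈ r • convexHull ℝ (Set.range v) := by
  refine ⟨Finset.univ.centerMass a v, Finset.centerMass_mem_convexHull _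
    (fun i _ => ha i) (by rw [hsum]; exact hr) (fun i _ => Set.mem_range_self i), ?_⟩
  show r • Finset.univ.centerMass a v = _
  rw [Finset.centerMass, hsum, smul_smul, mul_inv_cancel₀ hr.ne', one_smul]

lemma BGT_mem_hull {N M : ℕ} (hM : 0 < M) (v : Fin M → (Fin N → ℝ))
    {a : Fin M → ℝ} (ha : ∀ i, 0 ≤ a i) (hsum : ∑ i, a i = 1) :
    (∑ i, a i • v i) ∈ convexHull ℝ (Set.range v) := by
  have := Finset.centerMass_mem_convexHull (Finset.univ) (w := a) (z := v)
    (fun i _ => ha i) (by rw [hsum]; exact one_pos) (fun i _ => Set.mem_range_self i)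
  rwa [Finset.centerMass, hsum, inv_one, one_smul] at this

/-- Extract weights from convex-hull membership for an injective finite family. -/
lemma BGT_exists_weights {N M : ℕ} {v : Fin M → (Fin N → ℝ)} (hv : Function.Injective v)
    {x : Fin N → ℝ} (hx : x ∈ convexHull ℝ (Set.range v)) :
    ∃ w : Fin M → ℝ, (∀ i, 0 ≤ w i) ∧ ∑ i, w i = 1 ∧ x = ∑ i, w i • v i := by
  classical
  have hrange : Set.range v = (↑(Finset.univ.image v) : Set (Fin N → ℝ)) := by
    simp
  rw [hrange, Finset.convexHull_eq] at hx
  obtain ⟨w, hw0, hw1, hwx⟩ := hx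
  refine ⟨fun i => w (v i), fun i => hw0 _ (Finset.mem_image_of_mem v (Finset.mem_univ i)), ?_, ?_⟩
  · rw [← hw1, Finset.sum_image (fun i _ j _ h => hv h)]
  · rw [← hwx, Finset.centerMass, hw1, inv_one, one_smul,
      Finset.sum_image (fun i _ j _ h => hv h)]
    simp

/-- Distribute an integer total `M0` below pointwise caps `g`. -/
lemma BGT_dist {ι : Type*} [DecidableEq ι] (tt : Finset ι) (g : ι → ℤ) (M0 : ℤ)
    (hg : ∀ i ∈ tt, 0 ≤ g i) (h0 : 0 ≤ M0) (hle : M0 ≤ ∑ i ∈ tt, g i) :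
    ∃ h : ι → ℤ, (∀ i ∈ tt, 0 ≤ h i ∧ h i ≤ g i) ∧ ∑ i ∈ tt, h i = M0 := by
  classical
  induction tt using Finset.cons_induction generalizing M0 with
  | empty => exact ⟨0, by simp, by simpa using (le_antisymm (by simpa using hle) h0).symm⟩
  | cons a tt' ha ih =>
    rw [Finset.sum_cons] at hle
    set b := min M0 (g a) with hb
    have hga : 0 ≤ g a := hg a (Finset.mem_cons_self a tt')
    have hb0 : 0 ≤ b := le_min h0 hga
    have hrest : M0 - b ≤ ∑ i ∈ tt', g i := by
      rcases le_total M0 (g a) with h | h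
      · have : b = M0 := min_eq_left h
        rw [this]; simp
        exact Finset.sum_nonneg fun i hi => hg i (Finset.mem_cons_of_mem hi)
      · have : b = g a := min_eq_right h
        omega
    obtain ⟨h, hh, hhsum⟩ := ih (M0 - b) (fun i hi => hg i (Finset.mem_cons_of_mem hi))
      (by omega) hrest
    refine ⟨fun i => if i = a then b else h i, ?_, ?_⟩
    · intro i hi
      rcases Finset.mem_cons.mp hi with rfl | hi'
      · simp only [if_pos rfl]
        exact ⟨hb0, min_le_right _ _⟩
      · have hne : i ≠ a := fun h' => ha (h' ▸ hi')
        simp only [hne, if_neg]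
        exact ⟨(hh i hi').1, (hh i hi').2⟩
    · rw [Finset.sum_cons, if_pos rfl]
      have : ∑ i ∈ tt', (if i = a then b else h i) = ∑ i ∈ tt', h i :=
        Finset.sum_congr rfl fun i hi => by
          have hne : i ≠ a := fun h' => ha (h' ▸ hi); simp [hne]
      omega

/-- Lattice points in a bounded set are finite. -/
lemma BGT_finite_lattice {N : ℕ} (S : Set (Fin N → ℝ)) (hS : Bornology.IsBounded S) :
    {q : Fin N → ℤ | (fun j => (q j : ℝ)) ∈ S}.Finite := by
  obtain ⟨R, hR⟩ := hS.exists_norm_le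
  refine Set.Finite.subset (Set.finite_Icc (fun _ : Fin N => (-⌈R⌉ : ℤ)) fun _ => ⌈R⌉) ?_
  intro q hq
  have hn : ∀ j, |((q j : ℝ))| ≤ R := by
    intro j
    calc |((q j : ℝ))| = ‖(fun j' => ((q j' : ℝ))) j‖ := rfl
    _ ≤ ‖(fun j' => ((q j' : ℝ)))‖ := norm_le_pi_norm (fun j' => ((q j' : ℝ))) j
    _ ≤ R := hR _ hq
  constructor <;> intro j <;> simp only []
  · have := (abs_le.mp (hn j)).1
    have h2 : (-⌈R⌉ : ℝ) ≤ (q j : ℝ) := le_trans (by simpa using neg_le_neg (Int.le_ceil R)) this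
    exact_mod_cast h2
  · have := (abs_le.mp (hn j)).2
    have h2 : ((q j : ℝ)) ≤ (⌈R⌉ : ℝ) := le_trans this (Int.le_ceil R)
    exact_mod_cast h2
lemma BGT_sum_ite_zero {M : ℕ} (w : Fin M → ℝ) (j : Fin M) :
    ∑ i, (if i = j then (0:ℝ) else w i) = (∑ i, w i) - w j := by
  rw [← Finset.add_sum_erase _ w (Finset.mem_univ j),
    ← Finset.add_sum_erase _ (fun i => if i = j then (0:ℝ) else w i) (Finset.mem_univ j),
    if_pos rfl, zero_add,
    Finset.sum_congr rfl (fun i hi => if_neg (Finset.mem_erase.mp hi).1)]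
  ring

noncomputable def BGT_latCount (N c : ℕ) {M : ℕ} (v : Fin M → (Fin N → ℝ)) : ℕ :=
  ({q : Fin N → ℤ | (fun j => (q j : ℝ)) ∈ ((c : ℝ) + 1) • convexHull ℝ (Set.range v)}.ncard)

lemma BGT_key {N : ℕ} (c : ℕ) (hc : 0 < c) (P : Set (Fin N → ℝ)) (hPc : Convex ℝ P) :
    ∀ μ : ℕ, ∀ k M : ℕ, 0 < k → 0 < M → M ≤ c + 2 →
    ∀ v : Fin M → (Fin N → ℝ), AffineIndependent ℝ v → (∀ i, v i ∈ P) →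
    (∀ i, BGT_IsInt (v i)) →
    k + BGT_latCount N c v ≤ μ →
    ∀ z : Fin N → ℝ, BGT_IsInt z →
    ∀ a : Fin M → ℝ, (∀ i, 0 ≤ a i) → (∑ i, a i) = (k : ℝ) * c → z = ∑ i, a i • v i →
    ∃ f : Fin k → (Fin N → ℝ), (∀ t, f t ∈ (c : ℝ) • P ∧ BGT_IsInt (f t)) ∧ z = ∑ t, f t := by
  intro μ
  induction μ using Nat.strongRecOn with
  | ind μ IH =>
  intro k M hk hM hMc v hvai hvP hvint hμ z hzint a ha hasum hza
  classical
  have hcR : (0:ℝ) < (c:ℝ) := by exact_mod_cast hc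
  have hhullP : convexHull ℝ (Set.range v) ⊆ P :=
    convexHull_min (Set.range_subset_iff.mpr hvP) hPc
  have hMne : Nonempty (Fin M) := Fin.pos_iff_nonempty.mp hM
  cases k with
  | zero => omega
  | succ k1 =>
  cases k1 with
  | zero =>
    refine ⟨fun _ => z, fun t => ⟨?_, hzint⟩, by simp⟩
    have hz : z ∈ ((c:ℝ)) • convexHull ℝ (Set.range v) := by
      rw [hza]
      exact BGT_mem_smul_hull hM v ha hcR (by simpa using hasum)
    exact Set.smul_set_mono hhullP hz
  | succ k' =>
    set K : ℕ := k' + 1 + 1 with hK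
    set Fl : Fin M → ℤ := fun i => ⌊a i⌋ with hFl
    have hFl0 : ∀ i, 0 ≤ Fl i := fun i => Int.le_floor.mpr (by simpa using ha i)
    set m : ℤ := (K:ℤ) * (c:ℤ) - ∑ i, Fl i with hm
    have hfract : ∀ i, Int.fract (a i) = a i - (Fl i : ℝ) := fun i => rfl
    clear_value Fl m
    have hmreal : (m : ℝ) = ∑ i, Int.fract (a i) := by
      have h1 : ∑ i, Int.fract (a i) = ∑ i, (a i - (Fl i : ℝ)) := Finset.sum_congr rfl fun i _ => hfract i
      rw [h1, Finset.sum_sub_distrib, hasum, hm]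
      push_cast
      ring
    have hm0 : 0 ≤ m := by
      have : (0:ℝ) ≤ (m:ℝ) := by
        rw [hmreal]; exact Finset.sum_nonneg fun i _ => Int.fract_nonneg _
      exact_mod_cast this
    have hmltM : m < (M:ℤ) := by
      have h1 : ∑ i : Fin M, Int.fract (a i) < ∑ i : Fin M, (1:ℝ) :=
        Finset.sum_lt_sum_of_nonempty Finset.univ_nonempty fun i _ => Int.fract_lt_one _
      have h2 : (m:ℝ) < M := by rw [hmreal]; simpa using h1
      exact_mod_cast h2
    have hsumFl : ∑ i, Fl i = (K:ℤ) * (c:ℤ) - m := by omega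
    have hK1 : (1:ℤ) ≤ (K:ℤ) := by rw [hK]; push_cast; omega
    have hcKc : (c:ℤ) ≤ (K:ℤ) * (c:ℤ) := le_mul_of_one_le_left (Int.ofNat_nonneg c) hK1
    by_cases hmc : m ≤ (c:ℤ)
    · -- good case
      obtain ⟨h, hhb, hhsum⟩ := BGT_dist Finset.univ Fl ((c:ℤ) - m) (fun i _ => hFl0 i)
        (by omega) (by rw [hsumFl]; omega)
      have hh0 : ∀ i, 0 ≤ h i := fun i => (hhb i (Finset.mem_univ i)).1
      have hhFl : ∀ i, h i ≤ Fl i := fun i => (hhb i (Finset.mem_univ i)).2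
      set y : Fin N → ℝ := ∑ i, (Int.fract (a i) + (h i : ℝ)) • v i with hy
      have hyw : ∀ i, 0 ≤ Int.fract (a i) + (h i : ℝ) :=
        fun i => add_nonneg (Int.fract_nonneg _) (by exact_mod_cast hh0 i)
      have hysum : ∑ i, (Int.fract (a i) + (h i:ℝ)) = (c:ℝ) := by
        rw [Finset.sum_add_distrib, ← hmreal]
        have h1 : ((∑ i, h i : ℤ):ℝ) = (((c:ℤ) - m : ℤ) :ℝ) := by exact_mod_cast congrArg Int.cast hhsum
        push_cast at h1
        have h2 : ∑ i, ((h i:ℤ):ℝ) = ((c:ℝ)) - (m:ℝ) := by push_cast; push_cast at h1; linarith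
        rw [h2]; ring
      have hyP : y ∈ (c:ℝ) • P :=
        Set.smul_set_mono hhullP (BGT_mem_smul_hull hM v hyw hcR hysum)
      have hyz : y = z - ∑ i, ((Fl i - h i : ℤ):ℝ) • v i := by
        rw [hza, ← Finset.sum_sub_distrib]
        refine Finset.sum_congr rfl fun i _ => ?_
        rw [← sub_smul]
        congr 1
        have := hfract i
        push_cast
        linarith
      have hyint : BGT_IsInt y := by
        rw [hyz]
        exact BGT_isInt_sub hzint (BGT_isInt_comb (fun i => Fl i - h i) v hvint)
      have hz'int : BGT_IsInt (∑ i, ((Fl i - h i : ℤ):ℝ) • v i) :=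
        BGT_isInt_comb (fun i => Fl i - h i) v hvint
      have hz'w : ∀ i, (0:ℝ) ≤ ((Fl i - h i : ℤ):ℝ) := fun i => by
        exact_mod_cast sub_nonneg.mpr (hhFl i)
      have hsumZ : ∑ i, (Fl i - h i) = ((k'+1 : ℕ):ℤ) * (c:ℤ) := by
        rw [Finset.sum_sub_distrib, hhsum, hsumFl, hK]
        push_cast
        ring
      have hz'sum : ∑ i, ((Fl i - h i : ℤ):ℝ) = ((k'+1 : ℕ):ℝ) * (c:ℝ) := by
        have := congrArg (Int.cast : ℤ → ℝ) hsumZ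
        push_cast at this
        push_cast
        linarith
      obtain ⟨f', hf', hsum'⟩ := IH (μ - 1) (by omega) (k'+1) M (by omega) hM hMc v hvai hvP
        hvint (by omega) _ hz'int (fun i => ((Fl i - h i : ℤ):ℝ)) hz'w hz'sum rfl
      refine ⟨Fin.cons y f', ?_, ?_⟩
      · intro t
        refine Fin.cases ?_ ?_ t
        · exact ⟨hyP, hyint⟩
        · intro t'; exact hf' t'
      · rw [Fin.sum_cons, ← hsum', hyz]; abel
    · -- bad case
      push_neg at hmc
      have hmeq : m = (c:ℤ) + 1 := by omega
      have hMeq : M = c + 2 := by omega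
      have hfpos : ∀ i, 0 < Int.fract (a i) := by
        intro i
        have hsplit : (m:ℝ) = Int.fract (a i) + ∑ i' ∈ Finset.univ.erase i, Int.fract (a i') := by
          rw [hmreal, ← Finset.add_sum_erase _ _ (Finset.mem_univ i)]
        have hcard : (Finset.univ.erase i).card = c + 1 := by
          rw [Finset.card_erase_of_mem (Finset.mem_univ i)]
          simp [hMeq]
        have hne : (Finset.univ.erase i).Nonempty := by
          rw [← Finset.card_pos, hcard]; omega
        have hlt : ∑ i' ∈ Finset.univ.erase i, Int.fract (a i') <
            ∑ i' ∈ Finset.univ.erase i, (1:ℝ) :=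
          Finset.sum_lt_sum_of_nonempty hne fun _ _ => Int.fract_lt_one _
        rw [Finset.sum_const, hcard, nsmul_eq_mul, mul_one] at hlt
        have hmr : (m:ℝ) = (c:ℝ) + 1 := by rw [hmeq]; push_cast; ring
        have hcc : ((c+1 : ℕ):ℝ) = (c:ℝ) + 1 := by push_cast; ring
        rw [hcc] at hlt
        linarith
      set t : Fin M → ℝ := fun i => 1 - Int.fract (a i) with ht
      have ht0 : ∀ i, 0 < t i := fun i => by
        simp only [ht, sub_pos]; exact Int.fract_lt_one _
      have ht1 : ∀ i, t i < 1 := fun i => by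
        simp only [ht, sub_lt_self_iff]; exact hfpos i
      have htsum : ∑ i, t i = 1 := by
        have hone : ∑ _i : Fin M, (1:ℝ) = (M:ℝ) := by simp
        simp only [ht]
        rw [Finset.sum_sub_distrib, ← hmreal, hone, hMeq, hmeq]
        push_cast
        ring
      set γ' : Fin N → ℝ := ∑ i, t i • v i with hγ'
      have hγ'hull : γ' ∈ convexHull ℝ (Set.range v) :=
        BGT_mem_hull hM v (fun i => (ht0 i).le) htsum
      have hγ'int : BGT_IsInt γ' := by
        have heq : γ' = (∑ i, ((1 + Fl i : ℤ):ℝ) • v i) - z := by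
          rw [hza, ← Finset.sum_sub_distrib]
          refine Finset.sum_congr rfl fun i _ => ?_
          rw [← sub_smul]
          congr 1
          have := hfract i
          simp only [ht]
          push_cast
          linarith
        rw [heq]
        exact BGT_isInt_sub (BGT_isInt_comb (fun i => 1 + Fl i) v hvint) hzint
      obtain ⟨j, -, hj⟩ := Finset.exists_min_image Finset.univ (fun i => a i / t i)
        Finset.univ_nonempty
      set θ : ℝ := a j / t j with hθ
      have hθ0 : 0 ≤ θ := div_nonneg (ha j) (ht0 j).le
      have hθle : ∀ i, θ * t i ≤ a i := by
        intro i
        calc θ * t i ≤ (a i / t i) * t i :=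
              mul_le_mul_of_nonneg_right (hj i (Finset.mem_univ i)) (ht0 i).le
        _ = a i := div_mul_cancel₀ _ (ht0 i).ne'
      have hθtj : θ * t j = a j := div_mul_cancel₀ _ (ht0 j).ne'
      set v' : Fin M → (Fin N → ℝ) := Function.update v j γ' with hv'
      set a' : Fin M → ℝ := fun i => if i = j then θ else a i - θ * t i with ha'
      have hv'eq : ∀ i, i ≠ j → v' i = v i := fun i hi => Function.update_of_ne hi _ _
      have hv'j : v' j = γ' := Function.update_self _ _ _
      have hexp : ∀ w : Fin M → ℝ, ∑ i, w i • v' i =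
          ∑ i, ((if i = j then 0 else w i) + w j * t i) • v i := by
        intro w
        have e1 : ∀ i, ((if i = j then (0:ℝ) else w i) + w j * t i) • v i
            = (if i = j then (0:ℝ) else w i) • v i + (w j * t i) • v i := fun i => add_smul _ _ _
        simp only [e1, Finset.sum_add_distrib]
        have e2 : ∑ i, (w j * t i) • v i = w j • γ' := by
          rw [hγ', Finset.smul_sum]
          exact Finset.sum_congr rfl fun i _ => (smul_smul _ _ _).symm
        rw [e2, ← Finset.add_sum_erase _ (fun i => w i • v' i) (Finset.mem_univ j),
          ← Finset.add_sum_erase _ (fun i => (if i = j then (0:ℝ) else w i) • v i)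
            (Finset.mem_univ j), hv'j, if_pos rfl, zero_smul, zero_add, add_comm (w j • γ')]
        congr 1
        refine Finset.sum_congr rfl fun i hi => ?_
        have hij : i ≠ j := (Finset.mem_erase.mp hi).1
        rw [hv'eq i hij, if_neg hij]
      have hsumerase : ∀ w : Fin M → ℝ, ∑ i ∈ Finset.univ.erase j, w i = (∑ i, w i) - w j := by
        intro w
        have := Finset.add_sum_erase Finset.univ w (Finset.mem_univ j)
        linarith
      have ha'sum : ∑ i, a' i = (K:ℝ) * (c:ℝ) := by
        rw [← Finset.add_sum_erase _ a' (Finset.mem_univ j)]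
        have e0 : a' j = θ := by simp [ha']
        have e1 : ∑ i ∈ Finset.univ.erase j, a' i =
            ∑ i ∈ Finset.univ.erase j, (a i - θ * t i) :=
          Finset.sum_congr rfl fun i hi => by
            simp [ha', (Finset.mem_erase.mp hi).1]
        rw [e0, e1, Finset.sum_sub_distrib, hsumerase a, ← Finset.mul_sum, hsumerase t,
          htsum, hasum]
        nlinarith [hθtj]
      have ha'0 : ∀ i, 0 ≤ a' i := by
        intro i
        by_cases hij : i = j
        · simp [ha', hij, hθ0]
        · simp only [ha', if_neg hij]
          linarith [hθle i]
      have hza' : z = ∑ i, a' i • v' i := by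
        rw [hexp a', hza]
        refine Finset.sum_congr rfl fun i _ => ?_
        congr 1
        have haj : a' j = θ := by simp [ha']
        by_cases hij : i = j
        · subst hij; rw [if_pos rfl, haj, zero_add, hθtj]
        · rw [if_neg hij, haj]
          simp only [ha', if_neg hij]
          ring
      have hv'ai : AffineIndependent ℝ v' := by
        rw [affineIndependent_iff_of_fintype]
        intro w hw hws
        rw [Finset.weightedVSub_eq_linear_combination _ hw, hexp w] at hws
        have husum : ∑ i, ((if i = j then 0 else w i) + w j * t i) = 0 := by
          rw [Finset.sum_add_distrib, BGT_sum_ite_zero, ← Finset.mul_sum, htsum, mul_one]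
          linarith [hw]
        have hall := (affineIndependent_iff_of_fintype (k := ℝ) v).mp hvai
          (fun i => (if i = j then 0 else w i) + w j * t i) husum
          (by rw [Finset.weightedVSub_eq_linear_combination _ husum]; exact hws)
        have hwj : w j = 0 := by
          have h9 := hall j
          simp only [eq_self_iff_true, if_true, ite_true, zero_add] at h9
          exact (mul_eq_zero.mp h9).resolve_right (ht0 j).ne'
        intro i
        by_cases hij : i = j
        · rw [hij]; exact hwj
        · have := hall i
          simp only [if_neg hij, hwj, zero_mul, add_zero] at this
          exact this
      have hv'P : ∀ i, v' i ∈ P := by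
        intro i
        by_cases hij : i = j
        · rw [hij, hv'j]; exact hhullP hγ'hull
        · rw [hv'eq i hij]; exact hvP i
      have hv'int : ∀ i, BGT_IsInt (v' i) := by
        intro i
        by_cases hij : i = j
        · rw [hij, hv'j]; exact hγ'int
        · rw [hv'eq i hij]; exact hvint i
      -- measure decrease
      have hconvsub : convexHull ℝ (Set.range v') ⊆ convexHull ℝ (Set.range v) := by
        apply convexHull_min _ (convex_convexHull _ _)
        rintro x ⟨i, rfl⟩
        by_cases hij : i = j
        · rw [hij, hv'j]; exact hγ'hull
        · rw [hv'eq i hij]; exact subset_convexHull _ _ (Set.mem_range_self i)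
      obtain ⟨qv, hqv⟩ := hvint j
      have hc1 : ((c:ℝ) + 1) ≠ 0 := by positivity
      have hqmem : (fun jj => (((c+1) * qv jj : ℤ) : ℝ)) ∈
          ((c:ℝ) + 1) • convexHull ℝ (Set.range v) := by
        refine ⟨v j, subset_convexHull ℝ _ (Set.mem_range_self j), ?_⟩
        funext jj
        rw [hqv]
        show ((c:ℝ) + 1) * (qv jj : ℝ) = _
        push_cast
        ring
      have hqnot : (fun jj => (((c+1) * qv jj : ℤ) : ℝ)) ∉
          ((c:ℝ) + 1) • convexHull ℝ (Set.range v') := by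
        intro hmem
        have hvj : v j ∈ convexHull ℝ (Set.range v') := by
          have h1 := (Set.mem_smul_set_iff_inv_smul_mem₀ hc1 _ _).mp hmem
          have h2 : ((c:ℝ)+1)⁻¹ • (fun jj => (((c+1) * qv jj : ℤ) : ℝ)) = v j := by
            funext jj
            rw [hqv]
            show ((c:ℝ)+1)⁻¹ * (((c+1) * qv jj : ℤ) : ℝ) = (qv jj : ℝ)
            push_cast
            field_simp
          rwa [h2] at h1
        obtain ⟨u, hu0, husum1, huvj⟩ := BGT_exists_weights hv'ai.injective hvj
        rw [hexp u] at huvj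
        have hUsum : ∑ i, ((if i = j then 0 else u i) + u j * t i) = 1 := by
          rw [Finset.sum_add_distrib, BGT_sum_ite_zero, ← Finset.mul_sum, htsum, mul_one]
          linarith [husum1]
        have hDsum : ∑ i, (if i = j then (1:ℝ) else 0) = 1 := by
          simp
        have hDv : ∑ i, (if i = j then (1:ℝ) else 0) • v i = v j := by
          rw [Finset.sum_eq_single j (fun i _ hij => by rw [if_neg hij, zero_smul])
            (fun h => absurd (Finset.mem_univ j) h), if_pos rfl, one_smul]
        have huniq := hvai.eq_of_sum_eq_sum (s := Finset.univ)
          (w₁ := fun i => (if i = j then 0 else u i) + u j * t i)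
          (w₂ := fun i => if i = j then (1:ℝ) else 0)
          (by rw [hUsum, hDsum]) (by rw [← huvj, hDv])
        have hUj : u j * t j = 1 := by
          have := huniq j (Finset.mem_univ j)
          simpa using this
        have huj1 : u j ≤ 1 := by
          have := Finset.single_le_sum (f := u) (fun i _ => hu0 i) (Finset.mem_univ j)
          rw [husum1] at this
          exact this
        nlinarith [ht1 j, ht0 j, hu0 j]
      have hssub : {q : Fin N → ℤ | (fun jj => (q jj : ℝ)) ∈
            ((c:ℝ) + 1) • convexHull ℝ (Set.range v')} ⊂
          {q : Fin N → ℤ | (fun jj => (q jj : ℝ)) ∈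
            ((c:ℝ) + 1) • convexHull ℝ (Set.range v)} := by
        constructor
        · intro p hp
          exact Set.smul_set_mono hconvsub hp
        · intro hcon
          exact hqnot (hcon hqmem)
      have hAfin : {q : Fin N → ℤ | (fun jj => (q jj : ℝ)) ∈
          ((c:ℝ) + 1) • convexHull ℝ (Set.range v)}.Finite := by
        apply BGT_finite_lattice
        have hcpt : IsCompact (convexHull ℝ (Set.range v)) :=
          (Set.finite_range v).isCompact_convexHull (𝕜 := ℝ)
        exact (hcpt.smul ((c:ℝ)+1)).isBounded
      have hcard : BGT_latCount N c v' < BGT_latCount N c v := by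
        unfold BGT_latCount
        exact Set.ncard_lt_ncard hssub hAfin
      obtain ⟨f', hf', hsum'⟩ := IH (μ - 1) (by omega) K M (by omega) hM hMc v' hv'ai hv'P
        hv'int (by omega) z hzint a' ha'0 ha'sum hza'
      exact ⟨f', hf', hsum'⟩
/-- Bruns–Gubeladze–Trung: if `P ⊂ ℝ^N` is an integral convex polytope of dimension `d`
and `n ≥ d - 1` is a positive integer, then the dilation `nP` has the integer
decomposition property. -/
theorem dilation_idp {N : ℕ}
    (s : Finset (Fin N → ℝ)) (hs : s.Nonempty)
    (hsint : ∀ x ∈ s, ∀ j, ∃ z : ℤ, x j = (z : ℝ))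
    (P : Set (Fin N → ℝ)) (hP : P = convexHull ℝ (s : Set (Fin N → ℝ)))
    (d : ℕ) (hd : d = Module.finrank ℝ (affineSpan ℝ P).direction)
    (n : ℕ) (hnpos : 0 < n) (hn : d ≤ n + 1) :
    ∀ k : ℕ, 0 < k → ∀ α ∈ (k : ℝ) • ((n : ℝ) • P), (∀ j, ∃ z : ℤ, α j = (z : ℝ)) →
      ∃ f : Fin k → (Fin N → ℝ),
        (∀ t, f t ∈ (n : ℝ) • P ∧ ∀ j, ∃ z : ℤ, f t j = (z : ℝ)) ∧ α = ∑ t, f t := by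
  intro k hk α hα hαint
  obtain ⟨β, hβ, rfl⟩ := hα
  obtain ⟨p, hp, rfl⟩ := hβ
  have hpc : p ∈ convexHull ℝ (s : Set (Fin N → ℝ)) := by rw [← hP]; exact hp
  rw [convexHull_eq_union] at hpc
  obtain ⟨T, hmem⟩ := Set.mem_iUnion.mp hpc
  obtain ⟨hTs, hmem⟩ := Set.mem_iUnion.mp hmem
  obtain ⟨hTai, hpT⟩ := Set.mem_iUnion.mp hmem
  have hTne : T.Nonempty := by
    rcases T.eq_empty_or_nonempty with rfl | h
    · simp at hpT
    · exact h
  set M : ℕ := T.card with hM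
  have hMpos : 0 < M := Finset.card_pos.mpr hTne
  set v : Fin M → (Fin N → ℝ) := fun i => ((T.equivFin.symm i) : Fin N → ℝ) with hv
  have hvai : AffineIndependent ℝ v :=
    (affineIndependent_equiv T.equivFin.symm).mpr hTai
  have hrange : Set.range v = (T : Set (Fin N → ℝ)) := by
    rw [hv]
    have : Set.range (fun i => ((T.equivFin.symm i) : Fin N → ℝ)) =
        Set.range ((↑) : {x // x ∈ T} → (Fin N → ℝ)) :=
      T.equivFin.symm.surjective.range_comp _
    rw [this, Subtype.range_coe_subtype]
    rfl
  have hMle : M ≤ n + 2 := by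
    have hfr : Module.finrank ℝ (vectorSpan ℝ (Set.range v)) = M - 1 :=
      hvai.finrank_vectorSpan (by simp [Nat.sub_add_cancel hMpos])
    have hsub : vectorSpan ℝ (Set.range v) ≤ (affineSpan ℝ P).direction := by
      rw [direction_affineSpan]
      apply vectorSpan_mono
      rw [hrange, hP]
      exact le_trans hTs (subset_convexHull ℝ _)
    have hmono := Submodule.finrank_mono hsub
    rw [hfr, ← hd] at hmono
    omega
  have hvP : ∀ i, v i ∈ P := by
    intro i
    rw [hP]
    refine subset_convexHull ℝ _ ?_
    exact hTs (Finset.coe_mem _)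
  have hvint : ∀ i, BGT_IsInt (v i) := fun i =>
    (BGT_isInt_iff _).mpr (hsint _ (hTs (Finset.coe_mem _)))
  have hPconv : Convex ℝ P := by rw [hP]; exact convex_convexHull ℝ _
  have hpT' : p ∈ convexHull ℝ (Set.range v) := by rw [hrange]; exact hpT
  obtain ⟨w, hw0, hwsum, hwp⟩ := BGT_exists_weights hvai.injective hpT'
  set a : Fin M → ℝ := fun i => ((k:ℝ) * (n:ℝ)) * w i with ha
  have ha0 : ∀ i, 0 ≤ a i := fun i => by
    have : (0:ℝ) ≤ (k:ℝ) * (n:ℝ) := by positivity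
    exact mul_nonneg this (hw0 i)
  have hasum : ∑ i, a i = (k:ℝ) * (n:ℝ) := by
    rw [ha, ← Finset.mul_sum, hwsum, mul_one]
  have hz : (k:ℝ) • ((n:ℝ) • p) = ∑ i, a i • v i := by
    rw [hwp, Finset.smul_sum, Finset.smul_sum]
    refine Finset.sum_congr rfl fun i _ => ?_
    rw [smul_smul, smul_smul, ha]
  have hzint : BGT_IsInt ((k:ℝ) • ((n:ℝ) • p)) := (BGT_isInt_iff _).mpr hαint
  obtain ⟨f, hf, hfsum⟩ := BGT_key n hnpos P hPconv
    (k + BGT_latCount N n v) k M hk hMpos hMle v hvai hvP hvint (le_refl _)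
    ((k:ℝ) • ((n:ℝ) • p)) hzint a ha0 hasum hz
  exact ⟨f, fun t => ⟨(hf t).1, (BGT_isInt_iff _).mp (hf t).2⟩, hfsum⟩
end

section
/- Let P₁ = conv{e₁+e₂, e₃+e₄, e₅+e₆} and P₂ = conv{e₁+e₆, e₂+e₃, e₄+e₅} in ℝ⁶, where e_i are standard basis vectors. For every integer n ≥ 2, the point (2n, 2n, 1, 1, 1, 1) lies in 2(nP₁ + P₂) ∩ ℤ⁶ but is not the sum of two lattice points of nP₁ + P₂; hence nP₁ + P₂ does not have the integer decomposition property. -/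
open Pointwise

lemma v60 (a b c d e f : ℝ) : (![a,b,c,d,e,f] : Fin 6 → ℝ) 0 = a := rfl
lemma v61 (a b c d e f : ℝ) : (![a,b,c,d,e,f] : Fin 6 → ℝ) 1 = b := rfl
lemma v62 (a b c d e f : ℝ) : (![a,b,c,d,e,f] : Fin 6 → ℝ) 2 = c := rfl
lemma v63 (a b c d e f : ℝ) : (![a,b,c,d,e,f] : Fin 6 → ℝ) 3 = d := rfl
lemma v64 (a b c d e f : ℝ) : (![a,b,c,d,e,f] : Fin 6 → ℝ) 4 = e := rfl
lemma v65 (a b c d e f : ℝ) : (![a,b,c,d,e,f] : Fin 6 → ℝ) 5 = f := rfl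

/-- Extraction of barycentric coordinates from membership in the convex hull
of three points. -/
lemma mem_tri {u v w x : Fin 6 → ℝ} (hx : x ∈ convexHull ℝ {u, v, w}) :
    ∃ α β γ : ℝ, 0 ≤ α ∧ 0 ≤ β ∧ 0 ≤ γ ∧ α + β + γ = 1 ∧ x = α • u + β • v + γ • w := by
  rw [show ({u, v, w} : Set (Fin 6 → ℝ)) = insert u {v, w} from rfl,
    convexHull_insert ⟨v, by simp⟩, convexHull_pair] at hx
  rw [mem_convexJoin] at hx
  obtain ⟨u', hu', z, hz, hseg⟩ := hx
  rw [Set.mem_singleton_iff] at hu'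
  subst hu'
  obtain ⟨p, q, hp, hq, hpq, rfl⟩ := hz
  obtain ⟨s, t, hs, ht, hst, rfl⟩ := hseg
  refine ⟨s, t * p, t * q, hs, by positivity, by positivity, by nlinarith, ?_⟩
  module

/-- Coordinates of an element of `n•P₁ + P₂`. -/
lemma coords {P₁ P₂ : Set (Fin 6 → ℝ)}
    (hP₁ : P₁ = convexHull ℝ {![1,1,0,0,0,0], ![0,0,1,1,0,0], ![0,0,0,0,1,1]})
    (hP₂ : P₂ = convexHull ℝ {![1,0,0,0,0,1], ![0,1,1,0,0,0], ![0,0,0,1,1,0]})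
    {n : ℕ} {a : Fin 6 → ℝ} (ha : a ∈ (n : ℝ) • P₁ + P₂) :
    ∃ A₁ A₂ A₃ β₁ β₂ β₃ : ℝ, 0 ≤ A₁ ∧ 0 ≤ A₂ ∧ 0 ≤ A₃ ∧ 0 ≤ β₁ ∧ 0 ≤ β₂ ∧ 0 ≤ β₃ ∧
      β₁ + β₂ + β₃ = 1 ∧
      a 0 = A₁ + β₁ ∧ a 1 = A₁ + β₂ ∧ a 2 = A₂ + β₂ ∧
      a 3 = A₂ + β₃ ∧ a 4 = A₃ + β₃ ∧ a 5 = A₃ + β₁ := by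
  obtain ⟨x, hx, y, hy, hxy⟩ := Set.mem_add.mp ha
  obtain ⟨p, hp, rfl⟩ := Set.mem_smul_set.mp hx
  rw [hP₁] at hp; rw [hP₂] at hy
  obtain ⟨α₁, α₂, α₃, hα₁, hα₂, hα₃, hαs, rfl⟩ := mem_tri hp
  obtain ⟨β₁, β₂, β₃, hβ₁, hβ₂, hβ₃, hβs, rfl⟩ := mem_tri hy
  have hn : (0:ℝ) ≤ (n:ℝ) := Nat.cast_nonneg n
  refine ⟨(n:ℝ)*α₁, (n:ℝ)*α₂, (n:ℝ)*α₃, β₁, β₂, β₃,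
    mul_nonneg hn hα₁, mul_nonneg hn hα₂, mul_nonneg hn hα₃, hβ₁, hβ₂, hβ₃, hβs,
    ?_, ?_, ?_, ?_, ?_, ?_⟩ <;>
  · rw [← hxy]
    simp only [Pi.add_apply, Pi.smul_apply, smul_eq_mul, v60, v61, v62, v63, v64, v65]
    ring

/-- Remark 2.6: for every `n ≥ 2` the point `(2n, 2n, 1, 1, 1, 1)` is a lattice point of
`2(nP₁ + P₂)` which is not a sum of two lattice points of `nP₁ + P₂`; hence `nP₁ + P₂`
does not have IDP. -/
theorem remark_not_idp
    (P₁ P₂ : Set (Fin 6 → ℝ))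
    (hP₁ : P₁ = convexHull ℝ {![1,1,0,0,0,0], ![0,0,1,1,0,0], ![0,0,0,0,1,1]})
    (hP₂ : P₂ = convexHull ℝ {![1,0,0,0,0,1], ![0,1,1,0,0,0], ![0,0,0,1,1,0]})
    (n : ℕ) (hn : 2 ≤ n) :
    (![(2*n : ℝ), 2*n, 1, 1, 1, 1]) ∈ (2 : ℝ) • ((n : ℝ) • P₁ + P₂) ∧
    ¬ ∃ a b : Fin 6 → ℝ, a ∈ (n : ℝ) • P₁ + P₂ ∧ b ∈ (n : ℝ) • P₁ + P₂ ∧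
        (∀ j, ∃ z : ℤ, a j = (z : ℝ)) ∧ (∀ j, ∃ z : ℤ, b j = (z : ℝ)) ∧
        (![(2*n : ℝ), 2*n, 1, 1, 1, 1]) = a + b := by
  constructor
  · -- membership of the point in `2(nP₁+P₂)`
    have hn0 : (2:ℝ) ≤ (n:ℝ) := by exact_mod_cast hn
    set v1 : Fin 6 → ℝ := ![1,1,0,0,0,0] with hv1
    set v2 : Fin 6 → ℝ := ![0,0,1,1,0,0] with hv2
    set v3 : Fin 6 → ℝ := ![0,0,0,0,1,1] with hv3
    set w1 : Fin 6 → ℝ := ![1,0,0,0,0,1] with hw1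
    set w2 : Fin 6 → ℝ := ![0,1,1,0,0,0] with hw2
    set w3 : Fin 6 → ℝ := ![0,0,0,1,1,0] with hw3
    set q : Fin 6 → ℝ := (1/2 : ℝ) • v2 + (1/2 : ℝ) • v3 with hq
    set p : Fin 6 → ℝ := ((3*(n:ℝ)-1)/(3*(n:ℝ))) • v1 + (1/(3*(n:ℝ))) • q with hp
    set r : Fin 6 → ℝ := (1/2 : ℝ) • w2 + (1/2 : ℝ) • w3 with hr
    set y : Fin 6 → ℝ := (1/3 : ℝ) • w1 + (2/3 : ℝ) • r with hy
    have hcH := convex_convexHull ℝ ({v1, v2, v3} : Set (Fin 6 → ℝ))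
    have hcH' := convex_convexHull ℝ ({w1, w2, w3} : Set (Fin 6 → ℝ))
    have hpP : p ∈ P₁ := by
      rw [hP₁]
      have hqm : q ∈ convexHull ℝ {v1, v2, v3} :=
        hcH.segment_subset (subset_convexHull ℝ _ (by simp)) (subset_convexHull ℝ _ (by simp))
          ⟨1/2, 1/2, by norm_num, by norm_num, by norm_num, hq.symm⟩
      exact hcH.segment_subset (subset_convexHull ℝ _ (by simp)) hqm
        ⟨(3*(n:ℝ)-1)/(3*(n:ℝ)), 1/(3*(n:ℝ)),
          div_nonneg (by linarith) (by linarith), by positivity, by field_simp; ring, hp.symm⟩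
    have hyP : y ∈ P₂ := by
      rw [hP₂]
      have hrm : r ∈ convexHull ℝ {w1, w2, w3} :=
        hcH'.segment_subset (subset_convexHull ℝ _ (by simp)) (subset_convexHull ℝ _ (by simp))
          ⟨1/2, 1/2, by norm_num, by norm_num, by norm_num, hr.symm⟩
      exact hcH'.segment_subset (subset_convexHull ℝ _ (by simp)) hrm
        ⟨1/3, 2/3, by norm_num, by norm_num, by norm_num, hy.symm⟩
    refine Set.mem_smul_set.mpr
      ⟨(n:ℝ) • p + y, Set.add_mem_add (Set.smul_mem_smul_set hpP) hyP, ?_⟩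
    have hne : (3*(n:ℝ)) ≠ 0 := by linarith
    funext j
    fin_cases j <;>
      simp only [hp, hq, hy, hr, hv1, hv2, hv3, hw1, hw2, hw3, Pi.add_apply, Pi.smul_apply,
        smul_eq_mul, Fin.reduceFinMk, Fin.isValue, v60, v61, v62, v63, v64, v65] <;>
      field_simp <;> ring
  · -- no decomposition into two lattice points
    rintro ⟨a, b, ha, hb, haz, hbz, heq⟩
    obtain ⟨A₁, A₂, A₃, β₁, β₂, β₃, hA₁, hA₂, hA₃, hβ₁, hβ₂, hβ₃, hβs, e0, e1, e2, e3, e4, e5⟩ :=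
      coords hP₁ hP₂ ha
    obtain ⟨B₁, B₂, B₃, γ₁, γ₂, γ₃, hB₁, hB₂, hB₃, hγ₁, hγ₂, hγ₃, hγs, f0, f1, f2, f3, f4, f5⟩ :=
      coords hP₁ hP₂ hb
    have t2 : a 2 + b 2 = 1 := by have := congrFun heq 2; rw [v62] at this; simpa using this.symm
    have t3 : a 3 + b 3 = 1 := by have := congrFun heq 3; rw [v63] at this; simpa using this.symm
    have t4 : a 4 + b 4 = 1 := by have := congrFun heq 4; rw [v64] at this; simpa using this.symm
    have t5 : a 5 + b 5 = 1 := by have := congrFun heq 5; rw [v65] at this; simpa using this.symm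
    have key : ∀ x y : ℝ, (∃ z : ℤ, x = (z:ℝ)) → 0 ≤ x → 0 ≤ y → x + y = 1 → x = 0 ∨ x = 1 := by
      rintro x y ⟨z, rfl⟩ h0 h1 hxy
      have h0' : (0:ℤ) ≤ z := by exact_mod_cast h0
      have h1' : z ≤ 1 := by exact_mod_cast (by linarith : (z:ℝ) ≤ 1)
      have : z = 0 ∨ z = 1 := by omega
      rcases this with h | h <;> [left; right] <;> rw [h] <;> norm_num
    have h2 := key (a 2) (b 2) (haz 2) (by linarith) (by linarith) t2
    have h3 := key (a 3) (b 3) (haz 3) (by linarith) (by linarith) t3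
    have h4 := key (a 4) (b 4) (haz 4) (by linarith) (by linarith) t4
    have h5 := key (a 5) (b 5) (haz 5) (by linarith) (by linarith) t5
    rcases h2 with h2 | h2 <;> rcases h3 with h3 | h3 <;> rcases h4 with h4 | h4 <;>
      rcases h5 with h5 | h5 <;> linarith
end

section
/- Let G be a connected simple graph on vertex set {1,…,d}. Then the edge polytope P_G has dimension d − 2 if G is bipartite, and dimension d − 1 if G is not bipartite. -/
open Pointwise
open Module

/-- `ρ({i,j}) = e_i + e_j`: the 0/1 indicator vector of an edge. -/
def edgeVec {d : ℕ} (e : Sym2 (Fin d)) : Fin d → ℝ :=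
  fun t => if t ∈ e then 1 else 0

/-- The edge polytope of a graph `G` on `{1, …, d}`. -/
def edgePolytope {d : ℕ} (G : SimpleGraph (Fin d)) : Set (Fin d → ℝ) :=
  convexHull ℝ (edgeVec '' G.edgeSet)

variable {d : ℕ} {G : SimpleGraph (Fin d)}

lemma edgeVec_eq' {i j : Fin d} (h : i ≠ j) : edgeVec s(i,j) = Pi.single i 1 + Pi.single j 1 := by
  funext t
  simp only [edgeVec, Sym2.mem_iff, Pi.add_apply, Pi.single_apply]
  by_cases h1 : t = i <;> by_cases h2 : t = j <;> simp_all [eq_comm]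

lemma dir_eq : (affineSpan ℝ (edgePolytope G)).direction
    = vectorSpan ℝ (edgeVec '' G.edgeSet) := by
  rw [edgePolytope, affineSpan_convexHull, direction_affineSpan]

lemma sub_mem_D {i j a b : Fin d} (hij : G.Adj i j) (hab : G.Adj a b) :
    (Pi.single i 1 + Pi.single j 1) - (Pi.single a 1 + Pi.single b 1)
      ∈ vectorSpan ℝ (edgeVec '' G.edgeSet) := by
  have h1 : edgeVec s(i,j) ∈ edgeVec '' G.edgeSet :=
    Set.mem_image_of_mem _ (G.mem_edgeSet.2 hij)
  have h2 : edgeVec s(a,b) ∈ edgeVec '' G.edgeSet :=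
    Set.mem_image_of_mem _ (G.mem_edgeSet.2 hab)
  have := vsub_mem_vectorSpan ℝ h1 h2
  rwa [vsub_eq_sub, edgeVec_eq' hij.ne, edgeVec_eq' hab.ne] at this

lemma walk_parity_mem {i j : Fin d} (w : G.Walk i j) :
    (Even w.length → (Pi.single i 1 - Pi.single j 1 : Fin d → ℝ)
        ∈ vectorSpan ℝ (edgeVec '' G.edgeSet)) ∧
    (¬ Even w.length → ∀ a b, G.Adj a b →
      (Pi.single i 1 + Pi.single j 1) - (Pi.single a 1 + Pi.single b 1)
        ∈ vectorSpan ℝ (edgeVec '' G.edgeSet)) := by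
  induction w with
  | nil =>
    exact ⟨fun _ => by simp, fun h => absurd (Even.zero) (by simpa using h : ¬ Even 0)⟩
  | @cons u v x h w ih =>
    constructor
    · intro he
      rw [SimpleGraph.Walk.length_cons, Nat.even_add_one] at he
      have := ih.2 he u v h
      have h2 : (Pi.single u 1 - Pi.single x 1 : Fin d → ℝ)
          = -((Pi.single v 1 + Pi.single x 1) - (Pi.single u 1 + Pi.single v 1)) := by abel
      rw [h2]
      exact neg_mem this
    · intro ho a b hab
      rw [SimpleGraph.Walk.length_cons, Nat.even_add_one, not_not] at ho
      have h1 := ih.1 ho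
      have h2 := sub_mem_D h hab
      have h3 : (Pi.single u 1 + Pi.single x 1) - (Pi.single a 1 + Pi.single b 1)
          = ((Pi.single u 1 + Pi.single v 1) - (Pi.single a 1 + Pi.single b 1))
            - ((Pi.single v 1 - Pi.single x 1 : Fin d → ℝ)) := by abel
      rw [h3]
      exact sub_mem h2 h1

lemma fin2_trick {a b c : Fin 2} (h : a ≠ b) : (a = c ↔ ¬ b = c) := by
  have ha := a.isLt; have hb := b.isLt; have hc := c.isLt
  rw [Fin.ne_iff_vne] at h
  constructor <;> intro h2 <;> [skip; skip] <;> rw [Fin.ext_iff] at * <;> omega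

lemma walk_parity_color (C : G.Coloring (Fin 2)) {i j : Fin d} (w : G.Walk i j) :
    Even w.length ↔ C i = C j := by
  induction w with
  | nil => simp
  | @cons u v x h w ih =>
    rw [SimpleGraph.Walk.length_cons, Nat.even_add_one, ih]
    have := C.valid h
    rw [← fin2_trick (C.valid h)]

/-- sum over a finset of coordinates, as a linear map -/
noncomputable def sumCoords (s : Finset (Fin d)) : (Fin d → ℝ) →ₗ[ℝ] ℝ :=
  ∑ i ∈ s, LinearMap.proj i

lemma sumCoords_apply (s : Finset (Fin d)) (x : Fin d → ℝ) :
    sumCoords s x = ∑ i ∈ s, x i := by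
  simp [sumCoords, LinearMap.sum_apply]

lemma sumCoords_single (s : Finset (Fin d)) (a : Fin d) :
    sumCoords s (Pi.single a 1) = if a ∈ s then 1 else 0 := by
  rw [sumCoords_apply]
  simp [Pi.single_apply]

/-- dimension of kernel of surjective-ish map -/
lemma finrank_ker_one (f : (Fin d → ℝ) →ₗ[ℝ] ℝ) (hf : LinearMap.range f = ⊤) :
    finrank ℝ (LinearMap.ker f) = d - 1 := by
  have h := LinearMap.finrank_range_add_finrank_ker f
  rw [hf] at h
  simp [finrank_pi] at h
  omega

lemma finrank_ker_two (f g : (Fin d → ℝ) →ₗ[ℝ] ℝ) (hf : LinearMap.range (f.prod g) = ⊤) :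
    finrank ℝ ((LinearMap.ker f) ⊓ (LinearMap.ker g) : Submodule ℝ (Fin d → ℝ)) = d - 2 := by
  have h := LinearMap.finrank_range_add_finrank_ker (f.prod g)
  rw [hf, LinearMap.ker_prod] at h
  simp [finrank_pi] at h
  omega

lemma card_le_finrank (D : Submodule ℝ (Fin d → ℝ)) (s : Finset (Fin d))
    (f : Fin d → (Fin d → ℝ))
    (hmem : ∀ i ∈ s, f i ∈ D)
    (hdiag : ∀ i ∈ s, f i i = 1)
    (hoff : ∀ i ∈ s, ∀ j ∈ s, j ≠ i → f i j = 0) :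
    s.card ≤ finrank ℝ D := by
  classical
  have hli : LinearIndependent ℝ (fun i : s => f i) := by
    rw [Fintype.linearIndependent_iff]
    intro g hg i
    have := congrFun hg i
    simp only [Finset.sum_apply, Pi.smul_apply, smul_eq_mul, Pi.zero_apply] at this
    rw [Finset.sum_eq_single i] at this
    · rw [hdiag i i.2, mul_one] at this; exact this
    · intro b _ hb
      rw [hoff b b.2 i i.2 (fun h => hb (Subtype.ext h.symm)), mul_zero]
    · simp
  have hli2 : LinearIndependent ℝ (fun i : s => (⟨f i, hmem i i.2⟩ : D)) := by
    apply LinearIndependent.of_comp D.subtype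
    exact hli
  have := hli2.fintype_card_le_finrank
  simpa using this

lemma vectorSpan_le_ker (f : (Fin d → ℝ) →ₗ[ℝ] ℝ) (c : ℝ)
    (h : ∀ p ∈ edgeVec '' G.edgeSet, f p = c) :
    vectorSpan ℝ (edgeVec '' G.edgeSet) ≤ LinearMap.ker f := by
  rw [vectorSpan_def, Submodule.span_le]
  rintro v hv
  rw [Set.mem_vsub] at hv
  obtain ⟨x, hx, y, hy, rfl⟩ := hv
  simp only [SetLike.mem_coe, LinearMap.mem_ker, vsub_eq_sub, map_sub, h x hx, h y hy, sub_self]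

lemma nonbip_all_sub_mem (hG : G.Connected) (hnc : ¬ G.Colorable 2) :
    ∀ i j : Fin d, (Pi.single i 1 - Pi.single j 1 : Fin d → ℝ)
      ∈ vectorSpan ℝ (edgeVec '' G.edgeSet) := by
  classical
  set D := vectorSpan ℝ (edgeVec '' G.edgeSet) with hD
  have hne : Nonempty (Fin d) := hG.nonempty
  obtain ⟨v0⟩ := hne
  set P : Fin d → Prop := fun k => (Pi.single v0 1 - Pi.single k 1 : Fin d → ℝ) ∈ D with hP
  -- if the P-coloring were proper we'd contradict hnc
  have hcol : ¬ ∀ i j : Fin d, G.Adj i j → ((P i) ↔ ¬ P j) := by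
    intro hp
    apply hnc
    exact ⟨SimpleGraph.Coloring.mk (fun k => if P k then 0 else 1) (by
      intro i j hij
      have := hp i j hij
      by_cases h1 : P i <;> by_cases h2 : P j <;> simp_all)⟩
  push_neg at hcol
  obtain ⟨i, j, hij, hiff⟩ := hcol
  -- from hiff: P i ↔ P j  (not a proper-coloring pair)
  have hsame : P i ↔ P j := by tauto
  -- case ¬ P i ∧ ¬ P j is impossible
  have hPi : P i := by
    by_contra hni
    have hnj : ¬ P j := fun h => hni (hsame.2 h)
    obtain ⟨w⟩ := hG.preconnected v0 i
    by_cases he : Even w.length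
    · exact hni ((walk_parity_mem w).1 he)
    · have := (walk_parity_mem w).2 he i j hij
      have h2 : (Pi.single v0 1 - Pi.single j 1 : Fin d → ℝ)
          = (Pi.single v0 1 + Pi.single i 1) - (Pi.single i 1 + Pi.single j 1) := by abel
      exact hnj (show (Pi.single v0 1 - Pi.single j 1 : Fin d → ℝ) ∈ D by rw [h2]; exact this)
  have hPj : P j := hsame.1 hPi
  -- now every vertex satisfies P
  have hall : ∀ k, P k := by
    intro k
    obtain ⟨w⟩ := hG.preconnected v0 k
    by_cases he : Even w.length
    · exact (walk_parity_mem w).1 he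
    · have h1 := (walk_parity_mem w).2 he i j hij
      have h2 : (Pi.single v0 1 - Pi.single k 1 : Fin d → ℝ)
          = (Pi.single v0 1 - Pi.single i 1) + (Pi.single v0 1 - Pi.single j 1)
            - ((Pi.single v0 1 + Pi.single k 1) - (Pi.single i 1 + Pi.single j 1)) := by abel
      show (Pi.single v0 1 - Pi.single k 1 : Fin d → ℝ) ∈ D
      rw [h2]
      exact sub_mem (add_mem hPi hPj) h1
  intro a b
  have h2 : (Pi.single a 1 - Pi.single b 1 : Fin d → ℝ)
      = (Pi.single v0 1 - Pi.single b 1) - (Pi.single v0 1 - Pi.single a 1) := by abel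
  rw [h2]
  exact sub_mem (hall b) (hall a)

lemma finrank_nonbip (hG : G.Connected) (hnc : ¬ G.Colorable 2) :
    finrank ℝ (vectorSpan ℝ (edgeVec '' G.edgeSet)) = d - 1 := by
  classical
  obtain ⟨v0⟩ := hG.nonempty
  set σ : (Fin d → ℝ) →ₗ[ℝ] ℝ := sumCoords Finset.univ with hσ
  have hupper : vectorSpan ℝ (edgeVec '' G.edgeSet) ≤ LinearMap.ker σ := by
    apply vectorSpan_le_ker σ 2
    rintro p ⟨e, he, rfl⟩
    induction e using Sym2.ind with
    | _ i j =>
      have hadj : G.Adj i j := G.mem_edgeSet.1 he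
      rw [edgeVec_eq' hadj.ne, map_add, sumCoords_single, sumCoords_single]
      norm_num
  have hrange : LinearMap.range σ = ⊤ := by
    rw [LinearMap.range_eq_top]
    intro r
    refine ⟨r • (Pi.single v0 1 : Fin d → ℝ), ?_⟩
    rw [map_smul, sumCoords_single]
    simp
  have hker : finrank ℝ (LinearMap.ker σ) = d - 1 := finrank_ker_one σ hrange
  have hub : finrank ℝ (vectorSpan ℝ (edgeVec '' G.edgeSet)) ≤ d - 1 := by
    rw [← hker]; exact Submodule.finrank_mono hupper
  have hlb : d - 1 ≤ finrank ℝ (vectorSpan ℝ (edgeVec '' G.edgeSet)) := by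
    have := card_le_finrank (vectorSpan ℝ (edgeVec '' G.edgeSet))
      (Finset.univ.erase v0)
      (fun i => Pi.single i 1 - Pi.single v0 1)
      (fun i _ => nonbip_all_sub_mem hG hnc i v0)
      (fun i hi => by
        have hne : i ≠ v0 := Finset.ne_of_mem_erase hi
        simp [Pi.single_apply, hne.symm])
      (fun i hi j hj hne => by
        have h1 : j ≠ v0 := Finset.ne_of_mem_erase hj
        simp [Pi.single_apply, hne, h1.symm])
    rwa [Finset.card_erase_of_mem (Finset.mem_univ v0), Finset.card_univ,
      Fintype.card_fin] at this
  omega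

lemma exists_adj (hG : G.Connected) (hd : 2 ≤ d) : ∃ v0 v1 : Fin d, G.Adj v0 v1 := by
  have h0 : (0 : ℕ) < d := by omega
  have h1 : (1 : ℕ) < d := by omega
  have hne : (⟨0, h0⟩ : Fin d) ≠ ⟨1, h1⟩ := by simp [Fin.ext_iff]
  obtain ⟨w⟩ := hG.preconnected ⟨0, h0⟩ ⟨1, h1⟩
  cases w with
  | cons h _ => exact ⟨_, _, h⟩

lemma fin2_eq_of_ne {a b c : Fin 2} (h1 : a ≠ c) (h2 : b ≠ c) : a = b := by
  have := a.isLt; have := b.isLt; have := c.isLt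
  rw [Fin.ne_iff_vne] at h1 h2
  rw [Fin.ext_iff]
  omega

lemma finrank_bip (hG : G.Connected) (hd : 2 ≤ d) (C : G.Coloring (Fin 2)) :
    finrank ℝ (vectorSpan ℝ (edgeVec '' G.edgeSet)) = d - 2 := by
  classical
  obtain ⟨v0, v1, hadj01⟩ := exists_adj hG hd
  set A : Finset (Fin d) := Finset.univ.filter (fun k => C k = C v0) with hA
  set B : Finset (Fin d) := Finset.univ.filter (fun k => C k ≠ C v0) with hB
  set φ : (Fin d → ℝ) →ₗ[ℝ] ℝ := sumCoords A with hφ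
  set φ' : (Fin d → ℝ) →ₗ[ℝ] ℝ := sumCoords B with hφ'
  have hmemA : ∀ k, k ∈ A ↔ C k = C v0 := fun k => by simp [hA]
  have hmemB : ∀ k, k ∈ B ↔ ¬ (C k = C v0) := fun k => by simp [hB]
  have hedge : ∀ {i j : Fin d}, G.Adj i j → φ (edgeVec s(i,j)) = 1 ∧ φ' (edgeVec s(i,j)) = 1 := by
    intro i j hij
    have hne := C.valid hij
    rw [edgeVec_eq' hij.ne]
    rw [hφ, hφ', map_add, map_add, sumCoords_single, sumCoords_single,
      sumCoords_single, sumCoords_single]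
    by_cases h1 : C i = C v0
    · have h2 : ¬ (C j = C v0) := fun h => hne (h1.trans h.symm)
      simp [hmemA, hmemB, h1, h2]
    · have h2 : C j = C v0 := (fin2_eq_of_ne (Ne.symm h1) (C.valid hij).symm).symm
      simp [hmemA, hmemB, h1, h2]
  -- upper bound
  have hup1 : vectorSpan ℝ (edgeVec '' G.edgeSet) ≤ LinearMap.ker φ := by
    apply vectorSpan_le_ker φ 1
    rintro p ⟨e, he, rfl⟩
    induction e using Sym2.ind with
    | _ i j => exact (hedge (G.mem_edgeSet.1 he)).1
  have hup2 : vectorSpan ℝ (edgeVec '' G.edgeSet) ≤ LinearMap.ker φ' := by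
    apply vectorSpan_le_ker φ' 1
    rintro p ⟨e, he, rfl⟩
    induction e using Sym2.ind with
    | _ i j => exact (hedge (G.mem_edgeSet.1 he)).2
  have hrange : LinearMap.range (φ.prod φ') = ⊤ := by
    rw [LinearMap.range_eq_top]
    rintro ⟨x, y⟩
    refine ⟨x • (Pi.single v0 1 : Fin d → ℝ) + y • (Pi.single v1 1 : Fin d → ℝ), ?_⟩
    have hv0A : v0 ∈ A := (hmemA v0).2 rfl
    have hv0B : v0 ∉ B := fun h => ((hmemB v0).1 h) rfl
    have hCv1 : ¬ (C v1 = C v0) := Ne.symm (C.valid hadj01)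
    have hv1A : v1 ∉ A := fun h => hCv1 ((hmemA v1).1 h)
    have hv1B : v1 ∈ B := (hmemB v1).2 hCv1
    have e1 : φ (Pi.single v0 1) = 1 := by rw [hφ, sumCoords_single]; simp [hv0A]
    have e2 : φ' (Pi.single v0 1) = 0 := by rw [hφ', sumCoords_single]; simp [hv0B]
    have e3 : φ (Pi.single v1 1) = 0 := by rw [hφ, sumCoords_single]; simp [hv1A]
    have e4 : φ' (Pi.single v1 1) = 1 := by rw [hφ', sumCoords_single]; simp [hv1B]
    ext
    · simp [map_add, map_smul, e1, e3]
    · simp [map_add, map_smul, e2, e4]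
  have hker : finrank ℝ ((LinearMap.ker φ) ⊓ (LinearMap.ker φ') : Submodule ℝ (Fin d → ℝ)) = d - 2 :=
    finrank_ker_two φ φ' hrange
  have hub : finrank ℝ (vectorSpan ℝ (edgeVec '' G.edgeSet)) ≤ d - 2 := by
    rw [← hker]
    exact Submodule.finrank_mono (le_inf hup1 hup2)
  -- lower bound
  set r : Fin d → Fin d := fun i => if C i = C v0 then v0 else v1 with hr
  have hrc : ∀ i, C (r i) = C i := by
    intro i
    by_cases h : C i = C v0
    · rw [hr]; simp only [if_pos h]; exact h.symm
    · rw [hr]; simp only [if_neg h]; exact fin2_eq_of_ne (Ne.symm (C.valid hadj01)) h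
  have hmem : ∀ i, (Pi.single i 1 - Pi.single (r i) 1 : Fin d → ℝ)
      ∈ vectorSpan ℝ (edgeVec '' G.edgeSet) := by
    intro i
    obtain ⟨w⟩ := hG.preconnected i (r i)
    exact (walk_parity_mem w).1 ((walk_parity_color C w).2 (hrc i).symm)
  have hrv : ∀ i, r i = v0 ∨ r i = v1 := by
    intro i
    by_cases h : C i = C v0 <;> simp [hr, h]
  have hlb : d - 2 ≤ finrank ℝ (vectorSpan ℝ (edgeVec '' G.edgeSet)) := by
    have hcard := card_le_finrank (vectorSpan ℝ (edgeVec '' G.edgeSet))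
      (Finset.univ \ {v0, v1})
      (fun i => Pi.single i 1 - Pi.single (r i) 1)
      (fun i _ => hmem i)
      (fun i hi => by
        simp only [Finset.mem_sdiff, Finset.mem_insert, Finset.mem_singleton] at hi
        push_neg at hi
        have : r i ≠ i := by rcases hrv i with h | h <;> rw [h] <;> [exact (hi.2.1).symm; exact (hi.2.2).symm]
        simp [Pi.single_apply, this])
      (fun i hi j hj hne => by
        simp only [Finset.mem_sdiff, Finset.mem_insert, Finset.mem_singleton] at hi hj
        push_neg at hi hj
        have h2 : r i ≠ j := by rcases hrv i with h | h <;> rw [h] <;> [exact (hj.2.1).symm; exact (hj.2.2).symm]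
        simp [Pi.single_apply, hne, h2.symm])
    have hsub : ({v0, v1} : Finset (Fin d)) ⊆ Finset.univ := Finset.subset_univ _
    rw [Finset.card_sdiff_of_subset hsub, Finset.card_univ, Fintype.card_fin,
      Finset.card_insert_of_notMem (by simpa using hadj01.ne), Finset.card_singleton] at hcard
    exact hcard
  omega

lemma finrank_degenerate (hd : d ≤ 1) :
    finrank ℝ (vectorSpan ℝ (edgeVec '' G.edgeSet)) = 0 := by
  have hempty : G.edgeSet = ∅ := by
    ext e
    induction e using Sym2.ind with
    | _ i j =>
      simp only [SimpleGraph.mem_edgeSet, Set.mem_empty_iff_false, iff_false]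
      intro h
      have : i = j := by
        have hi := i.isLt; have hj := j.isLt
        rw [Fin.ext_iff]; omega
      exact G.irrefl (this ▸ h)
  rw [hempty]
  simp [vectorSpan_empty]

/-- Ohsugi–Hibi: the dimension of the edge polytope of a connected graph `G` on `d`
vertices is `d - 2` if `G` is bipartite and `d - 1` otherwise. -/
theorem dim_edgePolytope {d : ℕ} (G : SimpleGraph (Fin d)) (hG : G.Connected) :
    (G.Colorable 2 →
      Module.finrank ℝ (affineSpan ℝ (edgePolytope G)).direction = d - 2) ∧
    (¬ G.Colorable 2 →
      Module.finrank ℝ (affineSpan ℝ (edgePolytope G)).direction = d - 1) := by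
  rw [dir_eq]
  constructor
  · intro hc
    obtain ⟨C⟩ := hc
    by_cases hd : 2 ≤ d
    · exact finrank_bip hG hd C
    · rw [finrank_degenerate (by omega)]
      omega
  · intro hnc
    exact finrank_nonbip hG hnc
end
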